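/- arXiv:2103.11475 — 3 statements merged into one kernel-verified Lean document; each statement's English description precedes it below -/
import Mathlib

section
/- (Garcia's inequality, case p = 2.) There exists a constant C₂ > 0 such that for any k ≥ 1 and any real numbers x₁,…,x_k with x₁ + … + x_k = 0, the average over all permutations σ of {1,…,k} of max_{1≤i≤k} |x_{σ(1)} + … + x_{σ(i)}|² is at most C₂ ∑_{i=1}^k x_i². -/
open Finset


open Finset
namespace GarciaAux






/-- running maximum -/
def runMax (a : ℕ → ℝ) : ℕ → ℝ
  | 0 => a 0
  | n+1 => max (runMax a n) (a (n+1))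

lemma le_runMax (a : ℕ → ℝ) : ∀ n, ∀ j, j ≤ n → a j ≤ runMax a n := by
  intro n
  induction n with
  | zero => intro j hj; interval_cases j; simp [runMax]
  | succ n ih =>
    intro j hj
    rcases Nat.lt_succ_iff_lt_or_eq.mp (Nat.lt_succ_of_le hj) with h | h
    · exact le_trans (ih j (Nat.lt_succ_iff.mp h)) (le_max_left _ _)
    · subst h; exact le_max_right _ _

lemma runMax_nonneg (a : ℕ → ℝ) (ha : ∀ i, 0 ≤ a i) (n : ℕ) : 0 ≤ runMax a n :=
  le_trans (ha 0) (le_runMax a n 0 (Nat.zero_le _))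

lemma runMax_congr (a a' : ℕ → ℝ) : ∀ n, (∀ j, j ≤ n → a j = a' j) → runMax a n = runMax a' n := by
  intro n
  induction n with
  | zero => intro h; simp [runMax, h 0 le_rfl]
  | succ n ih =>
    intro h
    simp only [runMax]
    rw [ih (fun j hj => h j (le_trans hj (Nat.le_succ n))), h (n+1) le_rfl]

lemma doobD (a : ℕ → ℝ) (ha : ∀ i, 0 ≤ a i) :
    ∀ m, ∑ i ∈ range (m+1), runMax a i * (a (i+1) - a i)
      ≤ runMax a m * a (m+1) - (runMax a m)^2 / 2 := by
  intro m
  induction m with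
  | zero =>
    rw [Finset.sum_range_one]
    show runMax a 0 * _ ≤ runMax a 0 * _ - _
    simp only [runMax]
    nlinarith [ha 0, sq_nonneg (a 0)]
  | succ m ih =>
    rw [sum_range_succ]
    have hmax : runMax a (m+1) = max (runMax a m) (a (m+1)) := rfl
    rcases le_or_gt (a (m+1)) (runMax a m) with h | h
    · rw [hmax, max_eq_left h]
      nlinarith [ih]
    · rw [hmax, max_eq_right h.le]
      nlinarith [ih, sq_nonneg (runMax a m - a (m+1))]

lemma doob_pathwise (a : ℕ → ℝ) (ha : ∀ i, 0 ≤ a i) (m : ℕ) :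
    (runMax a m)^2 ≤ 5 * (a m)^2 - 4 * ∑ i ∈ range m, runMax a i * (a (i+1) - a i) := by
  cases m with
  | zero => simp only [range_zero, sum_empty, runMax]; nlinarith [sq_nonneg (a 0)]
  | succ n =>
    have hD := doobD a ha n
    have hmax : runMax a (n+1) = max (runMax a n) (a (n+1)) := rfl
    rcases le_or_gt (a (n+1)) (runMax a n) with h | h
    · rw [hmax, max_eq_left h]
      nlinarith [sq_nonneg (2 * a (n+1) - runMax a n)]
    · rw [hmax, max_eq_right h.le]
      nlinarith [sq_nonneg (a (n+1) - runMax a n), sq_nonneg (runMax a n)]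






/-- partial sum of `x (σ 0), …, x (σ (n-1))` -/
def pS (k : ℕ) (x : Fin k → ℝ) (σ : Equiv.Perm (Fin k)) (n : ℕ) : ℝ :=
  ∑ j ∈ univ.filter (fun j : Fin k => (j : ℕ) < n), x (σ j)

lemma pS_zero (k : ℕ) (x : Fin k → ℝ) (σ : Equiv.Perm (Fin k)) : pS k x σ 0 = 0 := by
  simp [pS]

lemma pS_succ (k : ℕ) (x : Fin k → ℝ) (σ : Equiv.Perm (Fin k)) (i : ℕ) (hik : i < k) :
    pS k x σ (i+1) = pS k x σ i + x (σ ⟨i, hik⟩) := by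
  unfold pS
  have h : univ.filter (fun j : Fin k => (j : ℕ) < i+1)
      = insert (⟨i, hik⟩ : Fin k) (univ.filter (fun j : Fin k => (j : ℕ) < i)) := by
    ext j
    simp only [mem_filter, mem_univ, true_and, mem_insert, Fin.ext_iff]
    omega
  rw [h, sum_insert (by simp)]
  ring

lemma pS_total (k : ℕ) (x : Fin k → ℝ) (hx : ∑ i, x i = 0) (σ : Equiv.Perm (Fin k)) :
    pS k x σ k = 0 := by
  unfold pS
  have h : univ.filter (fun j : Fin k => (j : ℕ) < k) = univ := by
    ext j; simp [j.isLt]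
  rw [h, Equiv.sum_comp σ x, hx]

lemma pS_congr (k : ℕ) (x : Fin k → ℝ) (σ τ : Equiv.Perm (Fin k)) (n i : ℕ) (hin : i ≤ n)
    (hag : ∀ j : Fin k, (j : ℕ) < n → σ j = τ j) : pS k x σ i = pS k x τ i := by
  refine sum_congr rfl (fun j hj => ?_)
  rw [hag j (lt_of_lt_of_le (mem_filter.mp hj).2 hin)]

/-- swap trick : sums of `h σ * g (σ l)` don't depend on the position `l ≥ i`
when `h` only depends on the first `i` values. -/
lemma sum_swap (k : ℕ) (g : Fin k → ℝ) (i : ℕ) (h : Equiv.Perm (Fin k) → ℝ)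
    (Hh : ∀ σ τ : Equiv.Perm (Fin k), (∀ j : Fin k, (j : ℕ) < i → σ j = τ j) → h σ = h τ)
    (l l' : Fin k) (hl : i ≤ (l : ℕ)) (hl' : i ≤ (l' : ℕ)) :
    ∑ σ : Equiv.Perm (Fin k), h σ * g (σ l) = ∑ σ : Equiv.Perm (Fin k), h σ * g (σ l') := by
  rw [← Equiv.sum_comp (Equiv.mulRight (Equiv.swap l l'))
    (fun σ : Equiv.Perm (Fin k) => h σ * g (σ l'))]
  refine Fintype.sum_congr _ _ (fun σ => ?_)
  simp only [Equiv.coe_mulRight]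
  have h1 : h (σ * Equiv.swap l l') = h σ := by
    refine Hh _ _ (fun j hj => ?_)
    have hjl : j ≠ l := by
      intro hh; subst hh; omega
    have hjl' : j ≠ l' := by
      intro hh; subst hh; omega
    simp [Equiv.Perm.mul_apply, Equiv.swap_apply_of_ne_of_ne hjl hjl']
  rw [h1]
  have h2 : (σ * Equiv.swap l l') l' = σ l := by
    simp [Equiv.Perm.mul_apply]
  rw [h2]

/-- the key martingale identity -/
lemma key (k : ℕ) (x : Fin k → ℝ) (hx : ∑ i, x i = 0) (i : ℕ) (hik : i < k)
    (h : Equiv.Perm (Fin k) → ℝ)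
    (Hh : ∀ σ τ : Equiv.Perm (Fin k), (∀ j : Fin k, (j : ℕ) < i → σ j = τ j) → h σ = h τ) :
    ((k : ℝ) - i) * ∑ σ : Equiv.Perm (Fin k), h σ * x (σ ⟨i, hik⟩)
      = - ∑ σ : Equiv.Perm (Fin k), h σ * pS k x σ i := by
  set F := univ.filter (fun l : Fin k => i ≤ (l : ℕ)) with hF
  have hcard : F.card = k - i := by
    rw [hF, Finset.card_filter]
    rw [Fin.sum_univ_eq_sum_range (fun n => if i ≤ n then 1 else 0) k]
    rw [← Finset.card_filter]
    have : (range k).filter (fun n => i ≤ n) = Finset.Ico i k := by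
      ext n; simp [Finset.mem_Ico]; omega
    rw [this, Nat.card_Ico]
  have hconst : ∀ l ∈ F, (∑ σ : Equiv.Perm (Fin k), h σ * x (σ l))
      = ∑ σ : Equiv.Perm (Fin k), h σ * x (σ ⟨i, hik⟩) := by
    intro l hl
    exact sum_swap k x i h Hh l ⟨i, hik⟩ (by simpa [hF] using hl) (by simp)
  have hsum : ∑ l ∈ F, ∑ σ : Equiv.Perm (Fin k), h σ * x (σ l)
      = (F.card : ℝ) * ∑ σ : Equiv.Perm (Fin k), h σ * x (σ ⟨i, hik⟩) := by
    rw [sum_congr rfl hconst, sum_const, nsmul_eq_mul]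
  have hsum2 : ∑ l ∈ F, ∑ σ : Equiv.Perm (Fin k), h σ * x (σ l)
      = ∑ σ : Equiv.Perm (Fin k), h σ * (- pS k x σ i) := by
    rw [Finset.sum_comm]
    refine Fintype.sum_congr _ _ (fun σ => ?_)
    rw [← Finset.mul_sum]
    congr 1
    have hsplit := Finset.sum_filter_add_sum_filter_not univ
      (fun l : Fin k => (l : ℕ) < i) (fun l => x (σ l))
    have htot : ∑ l : Fin k, x (σ l) = 0 := by rw [Equiv.sum_comp σ x, hx]
    have hFeq : F = univ.filter (fun l : Fin k => ¬ (l : ℕ) < i) := by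
      rw [hF]; congr 1; ext l; simp
    rw [hFeq]
    have : pS k x σ i = ∑ l ∈ univ.filter (fun l : Fin k => (l : ℕ) < i), x (σ l) := rfl
    rw [this] at *
    linarith [hsplit, htot]
  have hcast : ((k : ℝ) - i) = ((k - i : ℕ) : ℝ) := by
    rw [Nat.cast_sub hik.le]
  rw [hcast, ← hcard, ← hsum, hsum2]
  rw [← Finset.sum_neg_distrib]
  refine Fintype.sum_congr _ _ (fun σ => by ring)

/-- energy identity -/
lemma energy (k : ℕ) (hk : 0 < k) (x : Fin k → ℝ) (l : Fin k) :
    ∑ σ : Equiv.Perm (Fin k), (x (σ l))^2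
      = (k.factorial : ℝ) * (∑ a, x a ^ 2) / k := by
  have hstep : ∀ l' : Fin k, ∑ σ : Equiv.Perm (Fin k), (x (σ l'))^2
      = ∑ σ : Equiv.Perm (Fin k), (x (σ l))^2 := by
    intro l'
    have := sum_swap k (fun a => x a ^ 2) 0 (fun _ => (1:ℝ)) (fun _ _ _ => rfl)
      l' l (Nat.zero_le _) (Nat.zero_le _)
    simpa using this
  have hmain : (k : ℝ) * ∑ σ : Equiv.Perm (Fin k), (x (σ l))^2
      = (k.factorial : ℝ) * (∑ a, x a ^ 2) := by
    calc (k : ℝ) * ∑ σ : Equiv.Perm (Fin k), (x (σ l))^2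
        = ∑ _l' : Fin k, ∑ σ : Equiv.Perm (Fin k), (x (σ l))^2 := by
          rw [Finset.sum_const, card_univ, Fintype.card_fin, nsmul_eq_mul]
      _ = ∑ l' : Fin k, ∑ σ : Equiv.Perm (Fin k), (x (σ l'))^2 := by
          refine Fintype.sum_congr _ _ (fun l' => (hstep l').symm)
      _ = ∑ σ : Equiv.Perm (Fin k), ∑ l' : Fin k, (x (σ l'))^2 := Finset.sum_comm
      _ = ∑ _σ : Equiv.Perm (Fin k), ∑ a, x a ^ 2 := by
          refine Fintype.sum_congr _ _ (fun σ => Equiv.sum_comp σ (fun a => x a ^ 2))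
      _ = (k.factorial : ℝ) * (∑ a, x a ^ 2) := by
          rw [Finset.sum_const, card_univ, Fintype.card_perm, Fintype.card_fin, nsmul_eq_mul]
  have hk' : (k : ℝ) ≠ 0 := Nat.cast_ne_zero.mpr hk.ne'
  field_simp
  linarith [hmain]




/-- second moment bound -/
lemma Qbound (k : ℕ) (hk : 0 < k) (x : Fin k → ℝ) (hx : ∑ i, x i = 0) :
    ∀ m, m ≤ k → ∑ σ : Equiv.Perm (Fin k), (pS k x σ m)^2
      ≤ m * ((k.factorial : ℝ) * (∑ a, x a ^ 2) / k) := by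
  intro m
  induction m with
  | zero => intro _; simp [pS_zero]
  | succ i ih =>
    intro him
    have hik : i < k := him
    have hkey := key k x hx i hik (fun σ => pS k x σ i)
      (fun σ τ hag => pS_congr k x σ τ i i le_rfl hag)
    have hQ0 : (0:ℝ) ≤ ∑ σ : Equiv.Perm (Fin k), (pS k x σ i)^2 :=
      Finset.sum_nonneg (fun σ _ => sq_nonneg _)
    have hc : (0:ℝ) < (k : ℝ) - i := by
      have : (i:ℝ) + 1 ≤ k := by exact_mod_cast hik
      linarith
    have hmid : ∑ σ : Equiv.Perm (Fin k), pS k x σ i * x (σ ⟨i, hik⟩) ≤ 0 := by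
      have hS : ∑ σ : Equiv.Perm (Fin k), pS k x σ i * x (σ ⟨i, hik⟩)
          = (- ∑ σ : Equiv.Perm (Fin k), pS k x σ i * pS k x σ i) / ((k:ℝ) - i) := by
        rw [eq_div_iff hc.ne']
        linear_combination hkey
      rw [hS]
      apply div_nonpos_of_nonpos_of_nonneg
      · have : ∑ σ : Equiv.Perm (Fin k), pS k x σ i * pS k x σ i
            = ∑ σ : Equiv.Perm (Fin k), (pS k x σ i)^2 := by
          refine Fintype.sum_congr _ _ (fun σ => by ring)
        rw [this]; linarith
      · linarith
    have hexp : ∑ σ : Equiv.Perm (Fin k), (pS k x σ (i+1))^2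
        = (∑ σ : Equiv.Perm (Fin k), (pS k x σ i)^2)
          + 2 * (∑ σ : Equiv.Perm (Fin k), pS k x σ i * x (σ ⟨i, hik⟩))
          + ∑ σ : Equiv.Perm (Fin k), (x (σ ⟨i, hik⟩))^2 := by
      rw [Finset.mul_sum, ← Finset.sum_add_distrib, ← Finset.sum_add_distrib]
      refine Fintype.sum_congr _ _ (fun σ => ?_)
      rw [pS_succ k x σ i hik]; ring
    rw [hexp, energy k hk x ⟨i, hik⟩]
    have := ih (le_of_lt hik)
    push_cast
    linarith [this, hmid]

/-- normalized absolute partial sums (martingale form) -/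
noncomputable def aM (k : ℕ) (x : Fin k → ℝ) (σ : Equiv.Perm (Fin k)) (n : ℕ) : ℝ :=
  |pS k x σ n| / max 1 ((k : ℝ) - n)

lemma aM_nonneg (k : ℕ) (x : Fin k → ℝ) (σ : Equiv.Perm (Fin k)) (n : ℕ) : 0 ≤ aM k x σ n := by
  unfold aM
  have : (0:ℝ) < max 1 ((k:ℝ) - n) := lt_of_lt_of_le one_pos (le_max_left _ _)
  positivity

lemma aM_eq (k : ℕ) (x : Fin k → ℝ) (σ : Equiv.Perm (Fin k)) (n : ℕ) (hn : n < k) :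
    aM k x σ n = |pS k x σ n| / ((k : ℝ) - n) := by
  unfold aM
  rw [max_eq_right]
  have : (n:ℝ) + 1 ≤ k := by exact_mod_cast hn
  linarith

lemma aM_congr (k : ℕ) (x : Fin k → ℝ) (σ τ : Equiv.Perm (Fin k)) (n j : ℕ) (hjn : j ≤ n)
    (hag : ∀ j : Fin k, (j : ℕ) < n → σ j = τ j) : aM k x σ j = aM k x τ j := by
  unfold aM
  rw [pS_congr k x σ τ n j hjn hag]

/-- the cross (submartingale) term is nonnegative in average -/
lemma cross_nonneg (k : ℕ) (x : Fin k → ℝ) (hx : ∑ i, x i = 0) (i m : ℕ)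
    (him : i < m) (hmk : m < k) :
    0 ≤ ∑ σ : Equiv.Perm (Fin k), runMax (aM k x σ) i * (aM k x σ (i+1) - aM k x σ i) := by
  have hik : i < k := lt_trans him hmk
  have hik1 : i + 1 < k := lt_of_le_of_lt him hmk
  set c : ℝ := (k : ℝ) - i with hcdef
  set c' : ℝ := (k : ℝ) - (i+1) with hc'def
  have hc : (0:ℝ) < c := by
    have : (i:ℝ) + 1 ≤ k := by exact_mod_cast hik
    simp only [hcdef]; linarith
  have hc' : (0:ℝ) < c' := by
    have : ((i:ℝ) + 1) + 1 ≤ k := by exact_mod_cast hik1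
    simp only [hc'def]; push_cast; linarith
  set h : Equiv.Perm (Fin k) → ℝ :=
    fun σ => runMax (aM k x σ) i * (if 0 ≤ pS k x σ i then 1 else -1) with hhdef
  have Hh : ∀ σ τ : Equiv.Perm (Fin k), (∀ j : Fin k, (j : ℕ) < i → σ j = τ j) → h σ = h τ := by
    intro σ τ hag
    have h1 : runMax (aM k x σ) i = runMax (aM k x τ) i :=
      runMax_congr _ _ i (fun j hj => aM_congr k x σ τ i j hj hag)
    have h2 : pS k x σ i = pS k x τ i := pS_congr k x σ τ i i le_rfl hag
    simp only [hhdef, h1, h2]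
  have hkey := key k x hx i hik h Hh
  -- the martingale-difference average vanishes
  have hzero : ∑ σ : Equiv.Perm (Fin k),
      (h σ * pS k x σ (i+1) / c' - h σ * pS k x σ i / c) = 0 := by
    have expand : ∀ σ : Equiv.Perm (Fin k),
        h σ * pS k x σ (i+1) / c' - h σ * pS k x σ i / c
        = (1/c') * (h σ * x (σ ⟨i, hik⟩)) + (1/(c*c')) * (h σ * pS k x σ i) := by
      intro σ
      rw [pS_succ k x σ i hik]
      have hcc' : c = c' + 1 := by simp only [hcdef, hc'def]; push_cast; ring
      field_simp
      rw [hcc']; ring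
    rw [Fintype.sum_congr _ _ expand]
    rw [Finset.sum_add_distrib, ← Finset.mul_sum, ← Finset.mul_sum]
    have hA : ∑ σ : Equiv.Perm (Fin k), h σ * x (σ ⟨i, hik⟩)
        = (- ∑ σ : Equiv.Perm (Fin k), h σ * pS k x σ i) / c := by
      rw [eq_div_iff hc.ne', hcdef]
      linear_combination hkey
    rw [hA]
    field_simp
    ring
  have hpt : ∀ σ : Equiv.Perm (Fin k),
      h σ * pS k x σ (i+1) / c' - h σ * pS k x σ i / c
        ≤ runMax (aM k x σ) i * (aM k x σ (i+1) - aM k x σ i) := by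
    intro σ
    have hR : 0 ≤ runMax (aM k x σ) i := runMax_nonneg _ (aM_nonneg k x σ) i
    rw [mul_sub, aM_eq k x σ (i+1) hik1, aM_eq k x σ i hik]
    rw [show ((k:ℝ) - ((i+1 : ℕ):ℝ)) = c' from by rw [hc'def]; push_cast; ring]
    rw [show ((k:ℝ) - ((i : ℕ):ℝ)) = c from by rw [hcdef]]
    have e1 : h σ * pS k x σ i = runMax (aM k x σ) i * |pS k x σ i| := by
      simp only [hhdef]
      rcases le_or_gt 0 (pS k x σ i) with h0 | h0
      · rw [if_pos h0, abs_of_nonneg h0]; ring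
      · rw [if_neg (not_le.mpr h0), abs_of_neg h0]; ring
    have e2 : h σ * pS k x σ (i+1) ≤ runMax (aM k x σ) i * |pS k x σ (i+1)| := by
      simp only [hhdef]
      rcases le_or_gt 0 (pS k x σ i) with h0 | h0
      · rw [if_pos h0]
        have := le_abs_self (pS k x σ (i+1))
        nlinarith
      · rw [if_neg (not_le.mpr h0)]
        have := neg_abs_le (pS k x σ (i+1))
        nlinarith
    have e3 : h σ * pS k x σ (i+1) / c' ≤ runMax (aM k x σ) i * |pS k x σ (i+1)| / c' :=
      (div_le_div_iff_of_pos_right hc').mpr e2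
    have e4 : h σ * pS k x σ i / c = runMax (aM k x σ) i * |pS k x σ i| / c := by
      rw [e1]
    rw [← mul_div_assoc, ← mul_div_assoc]
    linarith [e3, e4]
  calc (0:ℝ) = ∑ σ : Equiv.Perm (Fin k),
      (h σ * pS k x σ (i+1) / c' - h σ * pS k x σ i / c) := hzero.symm
    _ ≤ _ := Finset.sum_le_sum (fun σ _ => hpt σ)




/-- Doob-type bound for one half of the walk -/
lemma half (k : ℕ) (hk : 0 < k) (x : Fin k → ℝ) (hx : ∑ i, x i = 0) (m : ℕ) (hm : m < k) :
    ∑ σ : Equiv.Perm (Fin k), (runMax (aM k x σ) m)^2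
      ≤ 5 * ((k.factorial : ℝ) * (∑ a, x a ^ 2)) / ((k:ℝ) - m)^2 := by
  have hdm : (0:ℝ) < (k:ℝ) - m := by
    have : (m:ℝ) + 1 ≤ k := by exact_mod_cast hm
    linarith
  have hcross : (0:ℝ) ≤ ∑ σ : Equiv.Perm (Fin k),
      ∑ i ∈ range m, runMax (aM k x σ) i * (aM k x σ (i+1) - aM k x σ i) := by
    rw [Finset.sum_comm]
    refine Finset.sum_nonneg (fun i hi => ?_)
    exact cross_nonneg k x hx i m (mem_range.mp hi) hm
  have hpath : ∀ σ : Equiv.Perm (Fin k), (runMax (aM k x σ) m)^2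
      ≤ 5 * (aM k x σ m)^2
        - 4 * ∑ i ∈ range m, runMax (aM k x σ) i * (aM k x σ (i+1) - aM k x σ i) :=
    fun σ => doob_pathwise (aM k x σ) (aM_nonneg k x σ) m
  have h1 : ∑ σ : Equiv.Perm (Fin k), (runMax (aM k x σ) m)^2
      ≤ 5 * ∑ σ : Equiv.Perm (Fin k), (aM k x σ m)^2 := by
    calc ∑ σ : Equiv.Perm (Fin k), (runMax (aM k x σ) m)^2
        ≤ ∑ σ : Equiv.Perm (Fin k), (5 * (aM k x σ m)^2
          - 4 * ∑ i ∈ range m, runMax (aM k x σ) i * (aM k x σ (i+1) - aM k x σ i)) :=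
          Finset.sum_le_sum (fun σ _ => hpath σ)
      _ = 5 * (∑ σ : Equiv.Perm (Fin k), (aM k x σ m)^2)
          - 4 * ∑ σ : Equiv.Perm (Fin k),
            ∑ i ∈ range m, runMax (aM k x σ) i * (aM k x σ (i+1) - aM k x σ i) := by
          rw [Finset.sum_sub_distrib, ← Finset.mul_sum, ← Finset.mul_sum]
      _ ≤ 5 * ∑ σ : Equiv.Perm (Fin k), (aM k x σ m)^2 := by linarith [hcross]
  have h2 : ∑ σ : Equiv.Perm (Fin k), (aM k x σ m)^2
      = (∑ σ : Equiv.Perm (Fin k), (pS k x σ m)^2) / ((k:ℝ) - m)^2 := by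
    rw [Finset.sum_div]
    refine Fintype.sum_congr _ _ (fun σ => ?_)
    rw [aM_eq k x σ m hm, div_pow, sq_abs]
  have h3 : ∑ σ : Equiv.Perm (Fin k), (pS k x σ m)^2
      ≤ (k.factorial : ℝ) * (∑ a, x a ^ 2) := by
    have hq := Qbound k hk x hx m hm.le
    have hT : (0:ℝ) ≤ ∑ a, x a ^ 2 := Finset.sum_nonneg (fun a _ => sq_nonneg _)
    have hk' : (0:ℝ) < (k:ℝ) := by exact_mod_cast hk
    have hmk : (m:ℝ) ≤ (k:ℝ) := by exact_mod_cast hm.le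
    have : (m:ℝ) * ((k.factorial : ℝ) * (∑ a, x a ^ 2) / k)
        ≤ (k:ℝ) * ((k.factorial : ℝ) * (∑ a, x a ^ 2) / k) := by
      apply mul_le_mul_of_nonneg_right hmk
      positivity
    rw [mul_div_cancel₀ _ hk'.ne'] at this
    linarith [hq]
  rw [h2] at h1
  calc ∑ σ : Equiv.Perm (Fin k), (runMax (aM k x σ) m)^2
      ≤ 5 * ((∑ σ : Equiv.Perm (Fin k), (pS k x σ m)^2) / ((k:ℝ) - m)^2) := h1
    _ ≤ 5 * ((k.factorial : ℝ) * (∑ a, x a ^ 2)) / ((k:ℝ) - m)^2 := by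
        rw [mul_div_assoc]
        apply mul_le_mul_of_nonneg_left _ (by norm_num : (0:ℝ) ≤ 5)
        apply div_le_div_of_nonneg_right h3
        positivity

lemma point_bound (k : ℕ) (x : Fin k → ℝ) (σ : Equiv.Perm (Fin k)) (m n : ℕ)
    (hm : m < k) (hn : n ≤ m) :
    (pS k x σ n)^2 ≤ (k:ℝ)^2 * (runMax (aM k x σ) m)^2 := by
  have hnk : n < k := lt_of_le_of_lt hn hm
  have hd : (0:ℝ) < (k:ℝ) - n := by
    have : (n:ℝ) + 1 ≤ k := by exact_mod_cast hnk
    linarith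
  have hR : aM k x σ n ≤ runMax (aM k x σ) m := le_runMax _ m n hn
  have hRn : 0 ≤ runMax (aM k x σ) m := runMax_nonneg _ (aM_nonneg k x σ) m
  have habs : |pS k x σ n| = ((k:ℝ) - n) * aM k x σ n := by
    rw [aM_eq k x σ n hnk, mul_div_cancel₀ _ hd.ne']
  have hlek : ((k:ℝ) - n) ≤ (k:ℝ) := by
    have : (0:ℝ) ≤ (n:ℝ) := Nat.cast_nonneg n
    linarith
  have hle : |pS k x σ n| ≤ (k:ℝ) * runMax (aM k x σ) m := by
    rw [habs]
    exact mul_le_mul hlek hR (aM_nonneg k x σ n) (by positivity)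
  calc (pS k x σ n)^2 = |pS k x σ n|^2 := (sq_abs _).symm
    _ ≤ ((k:ℝ) * runMax (aM k x σ) m)^2 := by
        apply pow_le_pow_left₀ (abs_nonneg _) hle
    _ = (k:ℝ)^2 * (runMax (aM k x σ) m)^2 := by ring

lemma pS_rev (k : ℕ) (x : Fin k → ℝ) (hx : ∑ i, x i = 0) (σ : Equiv.Perm (Fin k))
    (n : ℕ) (hn : n ≤ k) :
    pS k x (σ * Fin.revPerm) n = - pS k x σ (k - n) := by
  unfold pS
  simp only [Equiv.Perm.mul_apply, Fin.revPerm_apply]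
  have h1 : ∑ j ∈ univ.filter (fun j : Fin k => (j : ℕ) < n), x (σ j.rev)
      = ∑ l ∈ univ.filter (fun l : Fin k => ¬ (l : ℕ) < k - n), x (σ l) := by
    refine Finset.sum_equiv Fin.revPerm (fun j => ?_) (fun j hj => ?_)
    · simp only [mem_filter, mem_univ, true_and, Fin.revPerm_apply, Fin.val_rev]
      omega
    · simp
  rw [h1]
  have hsplit := Finset.sum_filter_add_sum_filter_not univ
    (fun l : Fin k => (l : ℕ) < k - n) (fun l => x (σ l))
  have htot : ∑ l : Fin k, x (σ l) = 0 := by rw [Equiv.sum_comp σ x, hx]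
  linarith [hsplit, htot]



end GarciaAux

/-- Garcia's inequality for `p = 2`: there is a constant `C₂ > 0` such that for any reals
`x₁,…,x_k` summing to zero, the average over all permutations `σ` of the squared maximal
partial sum `max_{1≤i≤k} |x_{σ(1)}+…+x_{σ(i)}|²` is at most `C₂ ∑ xᵢ²`. -/
theorem garcia_inequality_p_two :
    ∃ C₂ : ℝ, 0 < C₂ ∧ ∀ (k : ℕ) (hk : 0 < k) (x : Fin k → ℝ),
      (∑ i, x i = 0) →
      (1 / (Nat.factorial k : ℝ)) *
          ∑ σ : Equiv.Perm (Fin k),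
            (Finset.univ.sup'
              (by have : Nonempty (Fin k) := Fin.pos_iff_nonempty.mp hk
                  exact Finset.univ_nonempty)
              (fun i : Fin k =>
                |∑ j ∈ Finset.univ.filter (fun j : Fin k => j ≤ i), x (σ j)| ^ 2))
        ≤ C₂ * ∑ i, x i ^ 2 := by
  refine ⟨100, by norm_num, ?_⟩
  intro k hk x hx
  have hT : (0:ℝ) ≤ ∑ i, x i ^ 2 := Finset.sum_nonneg (fun i _ => sq_nonneg _)
  have hfactpos : (0:ℝ) < (Nat.factorial k : ℝ) := by
    exact_mod_cast Nat.factorial_pos k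
  by_cases hk1 : k = 1
  · -- degenerate case: the only value is 0
    subst hk1
    have hσ : ∀ σ : Equiv.Perm (Fin 1),
        (Finset.univ.sup'
          (by have : Nonempty (Fin 1) := Fin.pos_iff_nonempty.mp hk
              exact Finset.univ_nonempty)
          (fun i : Fin 1 =>
            |∑ j ∈ Finset.univ.filter (fun j : Fin 1 => j ≤ i), x (σ j)| ^ 2)) ≤ 0 := by
      intro σ
      rw [Finset.sup'_le_iff]
      intro i _
      have hfil : Finset.univ.filter (fun j : Fin 1 => j ≤ i) = Finset.univ := by
        ext j
        simp [Subsingleton.elim j i]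
      rw [hfil]
      have : ∑ j : Fin 1, x (σ j) = 0 := by rw [Equiv.sum_comp σ x, hx]
      rw [this]
      simp
    have hsum : ∑ σ : Equiv.Perm (Fin 1),
        (Finset.univ.sup'
          (by have : Nonempty (Fin 1) := Fin.pos_iff_nonempty.mp hk
              exact Finset.univ_nonempty)
          (fun i : Fin 1 =>
            |∑ j ∈ Finset.univ.filter (fun j : Fin 1 => j ≤ i), x (σ j)| ^ 2)) ≤ 0 :=
      Finset.sum_nonpos (fun σ _ => hσ σ)
    have : (1 / (Nat.factorial 1 : ℝ)) *
        ∑ σ : Equiv.Perm (Fin 1),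
          (Finset.univ.sup'
            (by have : Nonempty (Fin 1) := Fin.pos_iff_nonempty.mp hk
                exact Finset.univ_nonempty)
            (fun i : Fin 1 =>
              |∑ j ∈ Finset.univ.filter (fun j : Fin 1 => j ≤ i), x (σ j)| ^ 2)) ≤ 0 :=
      mul_nonpos_of_nonneg_of_nonpos (by positivity) hsum
    nlinarith [hT]
  · -- main case : k ≥ 2
    have hk2 : 2 ≤ k := by omega
    set m : ℕ := (k+1)/2 with hmdef
    have hm1 : 1 ≤ m := by omega
    have hmk : m < k := by omega
    have hkm : k - m < k := by omega
    have h2m : k ≤ 2*m := by omega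
    have h3m : k ≤ 3*(k-m) := by omega
    set A : ℝ := (Nat.factorial k : ℝ) * (∑ a, x a ^ 2) with hAdef
    have hA : 0 ≤ A := by positivity
    set G : Equiv.Perm (Fin k) → ℝ := fun σ =>
      (k:ℝ)^2 * (GarciaAux.runMax (GarciaAux.aM k x σ) m)^2
      + (k:ℝ)^2 * (GarciaAux.runMax (GarciaAux.aM k x (σ * Fin.revPerm)) (k-m))^2 with hGdef
    have hsup : ∀ σ : Equiv.Perm (Fin k),
        (Finset.univ.sup'
          (by have : Nonempty (Fin k) := Fin.pos_iff_nonempty.mp hk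
              exact Finset.univ_nonempty)
          (fun i : Fin k =>
            |∑ j ∈ Finset.univ.filter (fun j : Fin k => j ≤ i), x (σ j)| ^ 2)) ≤ G σ := by
      intro σ
      rw [Finset.sup'_le_iff]
      intro i _
      have hfil : Finset.univ.filter (fun j : Fin k => j ≤ i)
          = Finset.univ.filter (fun j : Fin k => (j:ℕ) < (i:ℕ)+1) := by
        ext j
        simp only [Finset.mem_filter, Finset.mem_univ, true_and, Fin.le_def]
        omega
      rw [hfil, sq_abs]
      show (GarciaAux.pS k x σ ((i:ℕ)+1))^2 ≤ G σ
      rcases le_or_gt ((i:ℕ)+1) m with hcase | hcase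
      · have hpb := GarciaAux.point_bound k x σ m ((i:ℕ)+1) hmk hcase
        have h2nn : 0 ≤ (k:ℝ)^2 *
            (GarciaAux.runMax (GarciaAux.aM k x (σ * Fin.revPerm)) (k-m))^2 := by positivity
        rw [hGdef]
        dsimp only
        linarith
      · have hn : (i:ℕ)+1 ≤ k := i.isLt
        have hrr : σ * Fin.revPerm * Fin.revPerm = σ := by
          ext j
          simp [Equiv.Perm.mul_apply, Fin.rev_rev]
        have hrev := GarciaAux.pS_rev k x hx (σ * Fin.revPerm) ((i:ℕ)+1) hn
        rw [hrr] at hrev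
        rw [hrev, neg_sq]
        have hpb := GarciaAux.point_bound k x (σ * Fin.revPerm) (k-m) (k - ((i:ℕ)+1))
          hkm (by omega)
        have h1nn : 0 ≤ (k:ℝ)^2 * (GarciaAux.runMax (GarciaAux.aM k x σ) m)^2 := by positivity
        rw [hGdef]
        dsimp only
        linarith
    have hrevsum : ∑ σ : Equiv.Perm (Fin k),
        (GarciaAux.runMax (GarciaAux.aM k x (σ * Fin.revPerm)) (k-m))^2
        = ∑ σ : Equiv.Perm (Fin k), (GarciaAux.runMax (GarciaAux.aM k x σ) (k-m))^2 := by
      exact Equiv.sum_comp (Equiv.mulRight (Fin.revPerm : Equiv.Perm (Fin k)))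
        (fun σ => (GarciaAux.runMax (GarciaAux.aM k x σ) (k-m))^2)
    have hGsum : ∑ σ : Equiv.Perm (Fin k), G σ
        = (k:ℝ)^2 * (∑ σ : Equiv.Perm (Fin k), (GarciaAux.runMax (GarciaAux.aM k x σ) m)^2)
        + (k:ℝ)^2 * (∑ σ : Equiv.Perm (Fin k),
            (GarciaAux.runMax (GarciaAux.aM k x σ) (k-m))^2) := by
      rw [hGdef]
      dsimp only
      rw [Finset.sum_add_distrib, ← Finset.mul_sum, ← Finset.mul_sum, hrevsum]
    have hhalf1 := GarciaAux.half k hk x hx m hmk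
    have hhalf2 := GarciaAux.half k hk x hx (k-m) hkm
    -- numeric bounds on denominators
    have hkR : (0:ℝ) < (k:ℝ) := by exact_mod_cast hk
    have hd1 : (k:ℝ)/3 ≤ (k:ℝ) - m := by
      have hcast : ((k - m : ℕ) : ℝ) = (k:ℝ) - m := by
        rw [Nat.cast_sub hmk.le]
      have : (k:ℝ) ≤ 3 * ((k - m : ℕ) : ℝ) := by exact_mod_cast h3m
      rw [hcast] at this
      linarith
    have hd2cast : ((k:ℝ) - ((k - m : ℕ) : ℝ)) = (m:ℝ) := by
      rw [Nat.cast_sub hmk.le]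
      ring
    have hd2 : (k:ℝ)/2 ≤ (m:ℝ) := by
      have : (k:ℝ) ≤ 2 * (m:ℝ) := by exact_mod_cast h2m
      linarith
    have hd1pos : (0:ℝ) < (k:ℝ) - m := by linarith
    have hd2pos : (0:ℝ) < (m:ℝ) := by linarith
    have e1 : (k:ℝ)^2 * (5 * A / ((k:ℝ) - m)^2) ≤ 45 * A := by
      rw [mul_div_assoc']
      rw [div_le_iff₀ (by positivity : (0:ℝ) < ((k:ℝ) - m)^2)]
      nlinarith [mul_nonneg hA (sq_nonneg ((k:ℝ) - m)), hd1, hkR,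
        mul_le_mul_of_nonneg_left (mul_self_le_mul_self (by linarith : (0:ℝ) ≤ (k:ℝ)/3) hd1)
          (by linarith : (0:ℝ) ≤ 45 * A)]
    have e2 : (k:ℝ)^2 * (5 * A / ((k:ℝ) - ((k - m : ℕ) : ℝ))^2) ≤ 45 * A := by
      rw [hd2cast]
      rw [mul_div_assoc']
      rw [div_le_iff₀ (by positivity : (0:ℝ) < ((m:ℝ))^2)]
      nlinarith [mul_le_mul_of_nonneg_left (mul_self_le_mul_self (by linarith : (0:ℝ) ≤ (k:ℝ)/2) hd2)
          (by linarith : (0:ℝ) ≤ 45 * A)]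
    have htotal : ∑ σ : Equiv.Perm (Fin k), G σ ≤ 90 * A := by
      rw [hGsum]
      have b1 : (k:ℝ)^2 * (∑ σ : Equiv.Perm (Fin k),
          (GarciaAux.runMax (GarciaAux.aM k x σ) m)^2)
          ≤ (k:ℝ)^2 * (5 * A / ((k:ℝ) - m)^2) := by
        apply mul_le_mul_of_nonneg_left _ (sq_nonneg _)
        rw [hAdef]
        exact hhalf1
      have b2 : (k:ℝ)^2 * (∑ σ : Equiv.Perm (Fin k),
          (GarciaAux.runMax (GarciaAux.aM k x σ) (k-m))^2)
          ≤ (k:ℝ)^2 * (5 * A / ((k:ℝ) - ((k - m : ℕ) : ℝ))^2) := by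
        apply mul_le_mul_of_nonneg_left _ (sq_nonneg _)
        rw [hAdef]
        exact hhalf2
      linarith [e1, e2]
    have hfinal : ∑ σ : Equiv.Perm (Fin k),
        (Finset.univ.sup'
          (by have : Nonempty (Fin k) := Fin.pos_iff_nonempty.mp hk
              exact Finset.univ_nonempty)
          (fun i : Fin k =>
            |∑ j ∈ Finset.univ.filter (fun j : Fin k => j ≤ i), x (σ j)| ^ 2)) ≤ 90 * A :=
      le_trans (Finset.sum_le_sum (fun σ _ => hsup σ)) htotal
    rw [hAdef] at hfinal
    have hmul := mul_le_mul_of_nonneg_left hfinal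
      (by positivity : (0:ℝ) ≤ 1 / (Nat.factorial k : ℝ))
    calc (1 / (Nat.factorial k : ℝ)) * _ ≤ (1 / (Nat.factorial k : ℝ)) *
          (90 * ((Nat.factorial k : ℝ) * (∑ a, x a ^ 2))) := hmul
      _ = 90 * (∑ a, x a ^ 2) := by field_simp
      _ ≤ 100 * ∑ i, x i ^ 2 := by linarith
end

section
/- For a standard Brownian motion B on [0,1] and its discretization B^{[k]}(t) = B(⌊kt⌋/k), the mean squared maximal discretization error satisfies E sup_{t∈[0,1]} (B(t) − B^{[k]}(t))² = O(log k / k) as k → ∞. -/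
open MeasureTheory ProbabilityTheory Filter Set

/-- `B` is a standard one-dimensional Brownian motion on `[0,∞)` under `P`:
it starts at `0`, has independent Gaussian increments with `B(t) − B(s) ∼ N(0, t−s)`,
and a.s. continuous paths. -/
def IsStdBM {Ω : Type*} [MeasurableSpace Ω] (P : Measure Ω) (B : ℝ → Ω → ℝ) : Prop :=
  (∀ t, Measurable (B t)) ∧
  (∀ᵐ ω ∂P, B 0 ω = 0) ∧
  (∀ s t : ℝ, 0 ≤ s → s ≤ t →
    P.map (fun ω => B t ω - B s ω) = gaussianReal 0 ((t - s).toNNReal)) ∧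
  (∀ (n : ℕ) (τ : Fin (n + 1) → ℝ), Monotone τ → (∀ i, 0 ≤ τ i) →
    iIndepFun
      (fun (i : Fin n) ω => B (τ i.succ) ω - B (τ i.castSucc) ω) P) ∧
  (∀ᵐ ω ∂P, Continuous fun t => B t ω)

open Real
open scoped NNReal ENNReal

noncomputable section



lemma lintegral_exp_tail {a : ℝ} (ha : 0 < a) (c : ℝ) :
    ∫⁻ y in Ioi c, ENNReal.ofReal (Real.exp (-(a*y))) = ENNReal.ofReal (a⁻¹ * Real.exp (-(a*c))) := by
  rw [← ofReal_integral_eq_lintegral_ofReal]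
  · congr 1
    have h2 := integral_comp_mul_left_Ioi (fun u => Real.exp (-u)) c ha
    simp only [smul_eq_mul] at h2
    rw [h2, integral_exp_neg_Ioi]
  · simpa only [neg_mul, IntegrableOn] using exp_neg_integrableOn_Ioi c ha
  · exact Eventually.of_forall fun y => (Real.exp_pos _).le

lemma lintegral_Iic_comp_neg {g : ℝ → ℝ≥0∞} (hg : Measurable g) (c : ℝ) :
    ∫⁻ y in Iic c, g (-y) = ∫⁻ y in Ici (-c), g y := by
  have h := setLIntegral_map (μ := volume) (g := fun x : ℝ => -x) (s := Ici (-c))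
    measurableSet_Ici hg measurable_neg
  rw [Measure.map_neg_eq_self (volume : Measure ℝ)] at h
  rw [h]
  congr 1
  ext y
  simp [le_neg]

lemma gaussian_tail_bound (v : ℝ≥0) {x : ℝ} (hx : 0 < x) :
    gaussianReal 0 v {y | x < |y|} ≤ ENNReal.ofReal (2 * Real.exp (-x^2 / (2*(v:ℝ)))) := by
  rcases eq_or_ne v 0 with hv | hv
  · subst hv
    rw [gaussianReal_zero_var]
    rw [Measure.dirac_apply' _ (measurableSet_lt measurable_const measurable_abs)]
    have : (0:ℝ) ∉ {y : ℝ | x < |y|} := by simp; linarith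
    rw [Set.indicator_of_notMem this]
    exact zero_le
  · have hvpos : (0:ℝ) < v := by positivity
    by_cases hcase : x^2 ≤ 2*(v:ℝ)*Real.log 2
    · refine (prob_le_one).trans ?_
      rw [show (1:ℝ≥0∞) = ENNReal.ofReal 1 by simp]
      apply ENNReal.ofReal_le_ofReal
      have h2 : Real.exp (-Real.log 2) ≤ Real.exp (-x^2/(2*(v:ℝ))) := by
        apply Real.exp_le_exp.mpr
        rw [neg_div, neg_le_neg_iff, div_le_iff₀ (by positivity)]
        nlinarith
      rw [Real.exp_neg, Real.exp_log (by norm_num : (0:ℝ) < 2)] at h2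
      linarith
    · have hx2 : 2*(v:ℝ)*Real.log 2 < x^2 := lt_of_not_ge hcase
      set a : ℝ := x / (v:ℝ) with ha
      have hapos : 0 < a := by positivity
      set K : ℝ := a * Real.exp (x^2/(2*(v:ℝ))) with hK
      have hKpos : 0 < K := by positivity
      have hπ : (3.14:ℝ) < π := by
        have := Real.pi_gt_d6; linarith
      have hlog2 : (0.69:ℝ) < Real.log 2 := by
        have := Real.log_two_gt_d9; linarith
      have hc : (Real.sqrt (2*π*(v:ℝ)))⁻¹ ≤ a := by
        have hv2π : (v:ℝ)/(2*π) ≤ x^2 := by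
          rw [div_le_iff₀ (by positivity)]
          nlinarith [mul_nonneg (v.coe_nonneg) (sub_nonneg.mpr (by nlinarith : (1:ℝ) ≤ 4*π*Real.log 2))]
        have hsq : Real.sqrt ((v:ℝ)/(2*π)) ≤ x := by
          rw [show x = Real.sqrt (x^2) by rw [Real.sqrt_sq hx.le]]
          exact Real.sqrt_le_sqrt hv2π
        have hsqpos : 0 < Real.sqrt (2*π*(v:ℝ)) := by
          apply Real.sqrt_pos.mpr; positivity
        rw [inv_le_iff_one_le_mul₀ hsqpos, ha, div_mul_eq_mul_div,
          le_div_iff₀ hvpos, one_mul]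
        calc (v:ℝ) = Real.sqrt ((v:ℝ)/(2*π)) * Real.sqrt (2*π*(v:ℝ)) := by
              rw [← Real.sqrt_mul (by positivity)]
              rw [show (v:ℝ)/(2*π)*(2*π*(v:ℝ)) = (v:ℝ)^2 by field_simp]
              exact (Real.sqrt_sq (by positivity)).symm
          _ ≤ x * Real.sqrt (2*π*(v:ℝ)) := by
              apply mul_le_mul_of_nonneg_right hsq hsqpos.le
      have hpdf : ∀ y : ℝ, x ≤ |y| →
          gaussianPDF 0 v y ≤ ENNReal.ofReal (K * Real.exp (-(a * |y|))) := by
        intro y hy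
        rw [gaussianPDF]
        apply ENNReal.ofReal_le_ofReal
        rw [gaussianPDFReal]
        simp only [sub_zero]
        have h2 : -y^2 ≤ x^2 - 2*(v:ℝ)*(a*|y|) := by
          have : (v:ℝ)*(a*|y|) = x*|y| := by rw [ha]; field_simp
          nlinarith [sq_abs y, sq_nonneg (|y| - x)]
        have h1 : Real.exp (-y^2/(2*(v:ℝ))) ≤
            Real.exp (x^2/(2*(v:ℝ))) * Real.exp (-(a*|y|)) := by
          rw [← Real.exp_add]
          apply Real.exp_le_exp.mpr
          rw [div_le_iff₀ (by positivity : (0:ℝ) < 2*(v:ℝ))]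
          have hexpand : (x^2/(2*(v:ℝ)) + -(a*|y|)) * (2*(v:ℝ))
              = x^2 - 2*(v:ℝ)*(a*|y|) := by field_simp; ring
          rw [hexpand]
          linarith
        have hnn : (0:ℝ) ≤ Real.exp (-y^2/(2*(v:ℝ))) := (Real.exp_pos _).le
        calc (Real.sqrt (2*π*(v:ℝ)))⁻¹ * Real.exp (-y^2/(2*(v:ℝ)))
            ≤ a * (Real.exp (x^2/(2*(v:ℝ))) * Real.exp (-(a*|y|))) := by
              apply mul_le_mul hc h1 hnn hapos.le
          _ = K * Real.exp (-(a*|y|)) := by rw [hK]; ring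
      have hFm : Measurable fun y : ℝ => ENNReal.ofReal (K * Real.exp (-(a * |y|))) := by
        apply ENNReal.measurable_ofReal.comp
        exact (measurable_const.mul ((measurable_const.mul measurable_abs).neg.exp))
      have hmsets : MeasurableSet {y : ℝ | x < |y|} :=
        measurableSet_lt measurable_const measurable_abs
      rw [gaussianReal_apply 0 hv]
      have hsub : {y : ℝ | x < |y|} ⊆ Iic (-x) ∪ Ioi x := by
        intro y hy
        simp only [mem_setOf_eq] at hy
        rcases lt_abs.mp hy with h | h
        · exact Or.inr h
        · exact Or.inl (by simp only [mem_Iic]; linarith)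
      have hIoi : ∫⁻ y in Ioi x, ENNReal.ofReal (K * Real.exp (-(a * |y|)))
          = ENNReal.ofReal K * ENNReal.ofReal (a⁻¹ * Real.exp (-(a*x))) := by
        rw [setLIntegral_congr_fun measurableSet_Ioi
          (fun y (hy : y ∈ Ioi x) => by
            rw [abs_of_pos (lt_trans hx hy)])]
        simp_rw [ENNReal.ofReal_mul hKpos.le]
        rw [lintegral_const_mul' _ _ ENNReal.ofReal_ne_top, lintegral_exp_tail hapos]
      have hIic : ∫⁻ y in Iic (-x), ENNReal.ofReal (K * Real.exp (-(a * |y|)))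
          = ENNReal.ofReal K * ENNReal.ofReal (a⁻¹ * Real.exp (-(a*x))) := by
        have heq : ∀ y ∈ Iic (-x), ENNReal.ofReal (K * Real.exp (-(a * |y|)))
            = ENNReal.ofReal (K * Real.exp (a * y)) := by
          intro y hy
          simp only [mem_Iic] at hy
          rw [abs_of_neg (by linarith)]
          ring_nf
        have hsubst := lintegral_Iic_comp_neg
          (g := fun z => ENNReal.ofReal (K * Real.exp (-(a*z)))) (by
            apply ENNReal.measurable_ofReal.comp
            exact measurable_const.mul ((measurable_const.mul measurable_id).neg.exp)) (-x)
        simp only [mul_neg, neg_neg] at hsubst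
        rw [setLIntegral_congr_fun measurableSet_Iic heq, hsubst,
          ← Measure.restrict_congr_set Ioi_ae_eq_Ici]
        simp_rw [ENNReal.ofReal_mul hKpos.le]
        rw [lintegral_const_mul' _ _ ENNReal.ofReal_ne_top, lintegral_exp_tail hapos]
      calc ∫⁻ y in {y | x < |y|}, gaussianPDF 0 v y
          ≤ ∫⁻ y in {y | x < |y|}, ENNReal.ofReal (K * Real.exp (-(a * |y|))) := by
            apply setLIntegral_mono hFm (fun y hy => hpdf y (le_of_lt hy))
        _ ≤ ∫⁻ y in Iic (-x) ∪ Ioi x, ENNReal.ofReal (K * Real.exp (-(a * |y|))) :=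
            lintegral_mono_set hsub
        _ ≤ (∫⁻ y in Iic (-x), ENNReal.ofReal (K * Real.exp (-(a * |y|))))
            + ∫⁻ y in Ioi x, ENNReal.ofReal (K * Real.exp (-(a * |y|))) :=
            lintegral_union_le _ _ _
        _ = ENNReal.ofReal (2 * Real.exp (-x^2/(2*(v:ℝ)))) := by
            rw [hIic, hIoi, ← two_mul, ← mul_assoc,
              show (2:ℝ≥0∞) = ENNReal.ofReal 2 by norm_num,
              ← ENNReal.ofReal_mul (by norm_num), ← ENNReal.ofReal_mul (by positivity)]
            congr 1
            rw [hK, ha]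
            have hxvne : x/(v:ℝ) ≠ 0 := by positivity
            rw [show 2*(x/(v:ℝ)*Real.exp (x^2/(2*(v:ℝ))))*((x/(v:ℝ))⁻¹*Real.exp (-(x/(v:ℝ)*x)))
                = 2*((x/(v:ℝ))*(x/(v:ℝ))⁻¹)*(Real.exp (x^2/(2*(v:ℝ)))*Real.exp (-(x/(v:ℝ)*x))) by
                ring, mul_inv_cancel₀ hxvne, ← Real.exp_add, mul_one]
            congr 1
            field_simp
            ring



lemma sq_max_moment_bound {Ω : Type*} [MeasurableSpace Ω] (P : Measure Ω) [IsProbabilityMeasure P]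
    {f : Ω → ℝ} (hf : Measurable f) (hnn : ∀ ω, 0 ≤ f ω) {N : ℕ} (hN : 1 ≤ N)
    (htail : ∀ x : ℝ, 0 < x → P {ω | x < f ω} ≤ ENNReal.ofReal (2*N*Real.exp (-(N:ℝ)*x^2/2))) :
    ∫⁻ ω, ENNReal.ofReal (f ω ^ 2) ∂P ≤ ENNReal.ofReal ((2*Real.log N + 4)/N) := by
  have hNpos : (0:ℝ) < N := by exact_mod_cast hN
  rw [lintegral_eq_lintegral_meas_lt P (Eventually.of_forall fun ω => sq_nonneg (f ω))
    ((hf.pow_const 2).aemeasurable)]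
  set a : ℝ := 2*Real.log N/(N:ℝ) with ha
  have hann : 0 ≤ a := by
    apply div_nonneg _ hNpos.le
    have : (0:ℝ) ≤ Real.log N := Real.log_nonneg (by exact_mod_cast hN)
    linarith
  have hunion : Ioi (0:ℝ) = Ioc 0 a ∪ Ioi a := (Ioc_union_Ioi_eq_Ioi hann).symm
  rw [hunion]
  calc ∫⁻ t in Ioc 0 a ∪ Ioi a, P {ω | t < f ω ^ 2}
      ≤ (∫⁻ t in Ioc 0 a, P {ω | t < f ω ^ 2}) + ∫⁻ t in Ioi a, P {ω | t < f ω ^ 2} :=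
        lintegral_union_le _ _ _
    _ ≤ ENNReal.ofReal a + ENNReal.ofReal (4/N) := by
        gcongr
        · calc ∫⁻ t in Ioc 0 a, P {ω | t < f ω ^ 2} ≤ ∫⁻ _ in Ioc 0 a, 1 :=
              setLIntegral_mono measurable_const (fun t _ => prob_le_one)
          _ = ENNReal.ofReal a := by
              rw [setLIntegral_one, Real.volume_Ioc, sub_zero]
        · calc ∫⁻ t in Ioi a, P {ω | t < f ω ^ 2}
              ≤ ∫⁻ t in Ioi a, ENNReal.ofReal (2*N) * ENNReal.ofReal (Real.exp (-((N:ℝ)/2*t))) := by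
                apply setLIntegral_mono
                  (measurable_const.mul (ENNReal.measurable_ofReal.comp
                    ((measurable_const.mul measurable_id).neg.exp)))
                intro t ht
                simp only [mem_Ioi] at ht
                have htpos : 0 < t := lt_of_le_of_lt hann ht
                have hsub : {ω | t < f ω ^ 2} ⊆ {ω | Real.sqrt t < f ω} := by
                  intro ω hω
                  simp only [mem_setOf_eq] at hω ⊢
                  have hfpos : 0 < f ω := by
                    rcases (hnn ω).lt_or_eq with h | h
                    · exact h
                    · exfalso; rw [← h] at hω; simp at hω; nlinarith
                  exact (Real.sqrt_lt' hfpos).mpr hω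
                refine (measure_mono hsub).trans ?_
                refine (htail _ (Real.sqrt_pos.mpr htpos)).trans ?_
                rw [Real.sq_sqrt htpos.le]
                show ENNReal.ofReal (2 * (N:ℝ) * Real.exp (-(N:ℝ) * t / 2)) ≤
                  ENNReal.ofReal (2*N) * ENNReal.ofReal (Real.exp (-((N:ℝ)/2*t)))
                rw [← ENNReal.ofReal_mul (by positivity)]
                apply le_of_eq
                congr 2
                ring
            _ = ENNReal.ofReal (2*N) * ENNReal.ofReal (((N:ℝ)/2)⁻¹ * Real.exp (-((N:ℝ)/2*a))) := by
                rw [lintegral_const_mul' _ _ ENNReal.ofReal_ne_top,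
                  lintegral_exp_tail (by positivity : (0:ℝ) < (N:ℝ)/2)]
            _ = ENNReal.ofReal (4/N) := by
                rw [← ENNReal.ofReal_mul (by positivity)]
                congr 1
                have hNa : (N:ℝ)/2*a = Real.log N := by
                  rw [ha]; field_simp
                rw [hNa, Real.exp_neg, Real.exp_log hNpos]
                field_simp
                ring
    _ = ENNReal.ofReal ((2*Real.log N + 4)/N) := by
        rw [← ENNReal.ofReal_add hann (by positivity)]
        congr 1
        rw [ha]
        field_simp


def bigmax (g : ℕ → ℝ) : ℕ → ℝ
  | 0 => 0
  | (n+1) => max (bigmax g n) (g n)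

lemma bigmax_nonneg (g : ℕ → ℝ) (N : ℕ) : 0 ≤ bigmax g N := by
  induction N with
  | zero => simp [bigmax]
  | succ n ih => exact le_trans ih (le_max_left _ _)

lemma le_bigmax (g : ℕ → ℝ) {j N : ℕ} (h : j < N) : g j ≤ bigmax g N := by
  induction N with
  | zero => omega
  | succ n ih =>
    rcases Nat.lt_succ_iff_lt_or_eq.mp h with h' | h'
    · exact le_trans (ih h') (le_max_left _ _)
    · subst h'; exact le_max_right _ _

lemma bigmax_lt_exists (g : ℕ → ℝ) {N : ℕ} {x : ℝ} (hx : 0 ≤ x) (h : x < bigmax g N) :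
    ∃ j < N, x < g j := by
  induction N with
  | zero => simp [bigmax] at h; linarith
  | succ n ih =>
    rcases max_cases (bigmax g n) (g n) with ⟨he, _⟩ | ⟨he, _⟩ <;> rw [bigmax, he] at h
    · obtain ⟨j, hj, hxx⟩ := ih h; exact ⟨j, by omega, hxx⟩
    · exact ⟨n, by omega, h⟩

lemma measurable_bigmax {Ω : Type*} [MeasurableSpace Ω] (g : ℕ → Ω → ℝ)
    (hg : ∀ j, Measurable (g j)) (N : ℕ) :
    Measurable (fun ω => bigmax (fun j => g j ω) N) := by
  induction N with
  | zero => simp only [bigmax]; exact measurable_const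
  | succ n ih => exact Measurable.max ih (hg n)

def gridMax (w : ℝ → ℝ) (N : ℕ) : ℝ :=
  bigmax (fun j => |w (((j:ℝ)+1)/(N:ℝ)) - w ((j:ℝ)/(N:ℝ))|) N

lemma gridMax_nonneg (w : ℝ → ℝ) (N : ℕ) : 0 ≤ gridMax w N := bigmax_nonneg _ _

lemma dyadic_chain (w : ℝ → ℝ) {k : ℕ} (hk : 1 ≤ k) :
    ∀ (n : ℕ) (j : ℕ), j ≤ k*2^n →
    |w ((j:ℝ)/((k:ℝ)*2^n)) - w (((j/2^n : ℕ) : ℝ)/(k:ℝ))| ≤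
      ∑ m ∈ Finset.range n, gridMax w (k*2^(m+1)) := by
  intro n
  induction n with
  | zero =>
    intro j hj
    simp only [pow_zero, Nat.div_one, mul_one, Finset.range_zero, Finset.sum_empty]
    simp
  | succ n IH =>
    intro j hj
    have hkpos : (0:ℝ) < k := by exact_mod_cast hk
    have h2n : (0:ℝ) < (2:ℝ)^(n+1) := by positivity
    set i := j/2 with hi
    have hij : j = 2*i ∨ j = 2*i+1 := by omega
    have hpow : 2^(n+1) = 2*2^n := by ring
    have he : k*2^(n+1) = 2*(k*2^n) := by rw [hpow]; ring
    have hile : i ≤ k*2^n := by omega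
    have hdiv : j/2^(n+1) = i/2^n := by
      rw [hi, Nat.div_div_eq_div_mul, ← hpow]
    have hcast : (i:ℝ)/((k:ℝ)*2^n) = (2*(i:ℝ))/((k:ℝ)*2^(n+1)) := by
      rw [pow_succ]
      field_simp
    have hsum : ∑ m ∈ Finset.range (n+1), gridMax w (k*2^(m+1))
        = (∑ m ∈ Finset.range n, gridMax w (k*2^(m+1))) + gridMax w (k*2^(n+1)) :=
      Finset.sum_range_succ _ _
    rcases hij with hj2 | hj2
    · -- even case
      have : (j:ℝ)/((k:ℝ)*2^(n+1)) = (i:ℝ)/((k:ℝ)*2^n) := by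
        rw [hcast, hj2]; push_cast; ring_nf
      rw [this, hdiv, hsum]
      have := IH i hile
      have hg := gridMax_nonneg w (k*2^(n+1))
      linarith
    · -- odd case
      have hstep : |w ((j:ℝ)/((k:ℝ)*2^(n+1))) - w ((2*(i:ℝ))/((k:ℝ)*2^(n+1)))|
          ≤ gridMax w (k*2^(n+1)) := by
        have h2i : 2*i < k*2^(n+1) := by omega
        have hb := le_bigmax (fun j => |w (((j:ℝ)+1)/((k*2^(n+1):ℕ):ℝ)) -
          w ((j:ℝ)/((k*2^(n+1):ℕ):ℝ))|) h2i
        have e1 : (j:ℝ)/((k:ℝ)*2^(n+1)) = (((2*i:ℕ):ℝ)+1)/((k*2^(n+1):ℕ):ℝ) := by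
          push_cast [hj2]; ring
        have e2 : (2*(i:ℝ))/((k:ℝ)*2^(n+1)) = ((2*i:ℕ):ℝ)/((k*2^(n+1):ℕ):ℝ) := by
          push_cast; ring
        unfold gridMax
        rw [e1, e2]
        exact hb
      calc |w ((j:ℝ)/((k:ℝ)*2^(n+1))) - w (((j/2^(n+1) : ℕ):ℝ)/(k:ℝ))|
          ≤ |w ((j:ℝ)/((k:ℝ)*2^(n+1))) - w ((2*(i:ℝ))/((k:ℝ)*2^(n+1)))|
            + |w ((2*(i:ℝ))/((k:ℝ)*2^(n+1))) - w (((j/2^(n+1) : ℕ):ℝ)/(k:ℝ))| :=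
            abs_sub_le _ _ _
        _ ≤ gridMax w (k*2^(n+1)) + ∑ m ∈ Finset.range n, gridMax w (k*2^(m+1)) := by
            apply add_le_add hstep
            rw [← hcast, hdiv]
            exact IH i hile
        _ = ∑ m ∈ Finset.range (n+1), gridMax w (k*2^(m+1)) := by rw [hsum]; ring

lemma chain_pointwise {w : ℝ → ℝ} (hw : Continuous w) {k : ℕ} (hk : 1 ≤ k) {t : ℝ}
    (ht : t ∈ Icc (0:ℝ) 1) :
    ENNReal.ofReal ((w t - w (((⌊(k:ℝ)*t⌋ : ℤ) : ℝ)/(k:ℝ)))^2)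
      ≤ (∑' m : ℕ, ENNReal.ofReal (gridMax w (k*2^(m+1))))^2 := by
  obtain ⟨ht0, ht1⟩ := ht
  have hkpos : (0:ℝ) < k := by exact_mod_cast hk
  have hkt0 : 0 ≤ (k:ℝ)*t := by positivity
  have hfloor : ((⌊(k:ℝ)*t⌋ : ℤ) : ℝ) = ((⌊(k:ℝ)*t⌋₊ : ℕ) : ℝ) := by
    rw [← Int.natCast_floor_eq_floor hkt0]
    simp
  set i : ℕ := ⌊(k:ℝ)*t⌋₊ with hidef
  set S := ∑' m : ℕ, ENNReal.ofReal (gridMax w (k*2^(m+1))) with hS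
  have key : ENNReal.ofReal (|w t - w ((i:ℝ)/(k:ℝ))|) ≤ S := by
    set s : ℕ → ℝ := fun n => ((⌊(2:ℝ)^n * ((k:ℝ)*t)⌋₊ : ℕ) : ℝ)/((k:ℝ)*2^n) with hs
    have h2pos : ∀ n : ℕ, (0:ℝ) < 2^n := fun n => by positivity
    have hjle : ∀ n, ⌊(2:ℝ)^n*((k:ℝ)*t)⌋₊ ≤ k*2^n := by
      intro n
      have h1 : (2:ℝ)^n*((k:ℝ)*t) ≤ ((k*2^n : ℕ):ℝ) := by
        push_cast
        calc (2:ℝ)^n*((k:ℝ)*t) = ((k:ℝ)*2^n)*t := by ring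
          _ ≤ ((k:ℝ)*2^n)*1 := mul_le_mul_of_nonneg_left ht1 (by positivity)
          _ = (k:ℝ)*2^n := mul_one _
      calc ⌊(2:ℝ)^n*((k:ℝ)*t)⌋₊ ≤ ⌊((k*2^n:ℕ):ℝ)⌋₊ := Nat.floor_le_floor h1
        _ = k*2^n := Nat.floor_natCast _
    have hdivfl : ∀ n, (⌊(2:ℝ)^n*((k:ℝ)*t)⌋₊)/2^n = i := by
      intro n
      have hfd := Nat.floor_div_natCast ((2:ℝ)^n*((k:ℝ)*t)) (2^n)
      rw [hidef, ← hfd]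
      congr 1
      push_cast
      field_simp
    have hsn : ∀ n, |w (s n) - w ((i:ℝ)/(k:ℝ))|
        ≤ ∑ m ∈ Finset.range n, gridMax w (k*2^(m+1)) := by
      intro n
      have hd := dyadic_chain w hk n _ (hjle n)
      rw [hdivfl n] at hd
      exact hd
    have hexp : ∀ n : ℕ, (1/(2:ℝ))^n * (1/(k:ℝ)) * ((k:ℝ)*2^n) = 1 := by
      intro n
      rw [one_div, inv_pow]
      field_simp
    have hlow : ∀ n, t - (1/(2:ℝ))^n * (1/(k:ℝ)) ≤ s n := by
      intro n
      show t - (1/(2:ℝ))^n * (1/(k:ℝ)) ≤ ((⌊(2:ℝ)^n*((k:ℝ)*t)⌋₊:ℕ):ℝ)/((k:ℝ)*2^n)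
      have h1 : (t - (1/(2:ℝ))^n*(1/(k:ℝ))) * ((k:ℝ)*2^n) ≤ ((⌊(2:ℝ)^n*((k:ℝ)*t)⌋₊:ℕ):ℝ) := by
        nlinarith [Nat.lt_floor_add_one ((2:ℝ)^n*((k:ℝ)*t)), hexp n]
      rw [show t - (1/(2:ℝ))^n*(1/(k:ℝ))
          = ((t - (1/(2:ℝ))^n*(1/(k:ℝ)))*((k:ℝ)*2^n))/((k:ℝ)*2^n) by field_simp]
      apply div_le_div_of_nonneg_right h1 (by positivity) <;> skip
    have hup : ∀ n, s n ≤ t := by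
      intro n
      show ((⌊(2:ℝ)^n*((k:ℝ)*t)⌋₊:ℕ):ℝ)/((k:ℝ)*2^n) ≤ t
      rw [div_le_iff₀ (by positivity)]
      have hfl := Nat.floor_le (by positivity : (0:ℝ) ≤ (2:ℝ)^n*((k:ℝ)*t))
      nlinarith [hfl]
    have hgeo : Tendsto (fun n : ℕ => t - (1/(2:ℝ))^n * (1/(k:ℝ))) atTop (nhds t) := by
      have h1 : Tendsto (fun n : ℕ => (1/(2:ℝ))^n * (1/(k:ℝ))) atTop (nhds 0) := by
        have := (tendsto_pow_atTop_nhds_zero_of_lt_one (by norm_num : (0:ℝ) ≤ 1/2)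
          (by norm_num : (1/2:ℝ) < 1)).mul_const (1/(k:ℝ))
        simpa using this
      simpa using tendsto_const_nhds.sub h1
    have hlim : Tendsto s atTop (nhds t) :=
      tendsto_of_tendsto_of_tendsto_of_le_of_le hgeo tendsto_const_nhds hlow hup
    have hconv : Tendsto (fun n => ENNReal.ofReal (|w (s n) - w ((i:ℝ)/(k:ℝ))|)) atTop
        (nhds (ENNReal.ofReal (|w t - w ((i:ℝ)/(k:ℝ))|))) := by
      apply (ENNReal.continuous_ofReal.tendsto _).comp
      exact (((hw.tendsto t).comp hlim).sub_const _).abs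
    apply le_of_tendsto hconv
    filter_upwards with n
    calc ENNReal.ofReal (|w (s n) - w ((i:ℝ)/(k:ℝ))|)
        ≤ ENNReal.ofReal (∑ m ∈ Finset.range n, gridMax w (k*2^(m+1))) :=
          ENNReal.ofReal_le_ofReal (hsn n)
      _ = ∑ m ∈ Finset.range n, ENNReal.ofReal (gridMax w (k*2^(m+1))) :=
          ENNReal.ofReal_sum_of_nonneg (fun m _ => gridMax_nonneg w _)
      _ ≤ S := ENNReal.sum_le_tsum _
  rw [hfloor]
  calc ENNReal.ofReal ((w t - w ((i:ℝ)/(k:ℝ)))^2)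
      = (ENNReal.ofReal (|w t - w ((i:ℝ)/(k:ℝ))|))^2 := by
        rw [← ENNReal.ofReal_pow (abs_nonneg _), sq_abs]
    _ ≤ S^2 := by gcongr


lemma iSup_sq_of_monotone {g : ℕ → ℝ≥0∞} (hg : Monotone g) :
    (⨆ n, g n)^2 = ⨆ n, (g n)^2 := by
  have h1 : (⨆ n, g n)^2 = ⨆ i, ⨆ j, g i * g j := by
    rw [sq, ENNReal.iSup_mul]
    congr 1
    funext i
    rw [ENNReal.mul_iSup]
  apply le_antisymm
  · rw [h1]
    apply iSup₂_le
    intro i j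
    apply le_iSup_of_le (max i j)
    rw [sq]
    exact mul_le_mul' (hg (le_max_left i j)) (hg (le_max_right i j))
  · apply iSup_le
    intro n
    gcongr
    exact le_iSup g n

lemma minkowski_tsum {Ω : Type*} [MeasurableSpace Ω] (P : Measure Ω)
    (f : ℕ → Ω → ℝ≥0∞) (hf : ∀ m, Measurable (f m)) :
    ∫⁻ ω, (∑' m, f m ω)^2 ∂P ≤ (∑' m, (∫⁻ ω, (f m ω)^2 ∂P)^((1:ℝ)/2))^2 := by
  have hpart : ∀ n, Measurable (fun ω => ∑ m ∈ Finset.range n, f m ω) := by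
    intro n
    exact Finset.measurable_sum _ (fun m _ => hf m)
  have hmono : ∀ ω, Monotone (fun n => ∑ m ∈ Finset.range n, f m ω) := by
    intro ω n₁ n₂ h
    exact Finset.sum_le_sum_of_subset (Finset.range_subset_range.mpr h)
  -- finite Minkowski by induction
  have hfin : ∀ n, (∫⁻ ω, (∑ m ∈ Finset.range n, f m ω)^2 ∂P)^((1:ℝ)/2)
      ≤ ∑ m ∈ Finset.range n, (∫⁻ ω, (f m ω)^2 ∂P)^((1:ℝ)/2) := by
    intro n
    induction n with
    | zero =>
      simp
    | succ n ih =>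
      have hstep := ENNReal.lintegral_Lp_add_le (μ := P)
        (f := fun ω => ∑ m ∈ Finset.range n, f m ω) (g := f n)
        (hpart n).aemeasurable (hf n).aemeasurable one_le_two
      simp only [Finset.sum_range_succ]
      calc (∫⁻ ω, (∑ m ∈ Finset.range n, f m ω + f n ω)^2 ∂P)^((1:ℝ)/2)
          ≤ (∫⁻ ω, (∑ m ∈ Finset.range n, f m ω)^2 ∂P)^((1:ℝ)/2)
            + (∫⁻ ω, (f n ω)^2 ∂P)^((1:ℝ)/2) := by
            have h2 : ∀ x : ℝ≥0∞, x^(2:ℝ) = x^2 := fun x => by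
              rw [← ENNReal.rpow_natCast x 2]; norm_num
            simp only [← h2] at hstep ⊢
            exact hstep
        _ ≤ (∑ m ∈ Finset.range n, (∫⁻ ω, (f m ω)^2 ∂P)^((1:ℝ)/2))
            + (∫⁻ ω, (f n ω)^2 ∂P)^((1:ℝ)/2) := by gcongr
  calc ∫⁻ ω, (∑' m, f m ω)^2 ∂P
      = ∫⁻ ω, ⨆ n, (∑ m ∈ Finset.range n, f m ω)^2 ∂P := by
        apply lintegral_congr
        intro ω
        rw [ENNReal.tsum_eq_iSup_nat, iSup_sq_of_monotone (hmono ω)]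
    _ = ⨆ n, ∫⁻ ω, (∑ m ∈ Finset.range n, f m ω)^2 ∂P := by
        apply lintegral_iSup (fun n => (hpart n).pow_const 2)
        intro n₁ n₂ h ω
        dsimp only
        gcongr
    _ ≤ (∑' m, (∫⁻ ω, (f m ω)^2 ∂P)^((1:ℝ)/2))^2 := by
        apply iSup_le
        intro n
        have h1 := hfin n
        have h2 : ∑ m ∈ Finset.range n, (∫⁻ ω, (f m ω)^2 ∂P)^((1:ℝ)/2)
            ≤ ∑' m, (∫⁻ ω, (f m ω)^2 ∂P)^((1:ℝ)/2) := ENNReal.sum_le_tsum _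
        have h3 := h1.trans h2
        calc ∫⁻ ω, (∑ m ∈ Finset.range n, f m ω)^2 ∂P
            = ((∫⁻ ω, (∑ m ∈ Finset.range n, f m ω)^2 ∂P)^((1:ℝ)/2))^2 := by
              rw [← ENNReal.rpow_natCast _ 2, ← ENNReal.rpow_mul]
              norm_num
          _ ≤ (∑' m, (∫⁻ ω, (f m ω)^2 ∂P)^((1:ℝ)/2))^2 := by gcongr

lemma level_bound {Ω : Type*} [MeasurableSpace Ω] {P : Measure Ω} [IsProbabilityMeasure P]
    {B : ℝ → Ω → ℝ} (hB : IsStdBM P B) {N : ℕ} (hN : 1 ≤ N) :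
    ∫⁻ ω, ENNReal.ofReal ((gridMax (fun u => B u ω) N)^2) ∂P
      ≤ ENNReal.ofReal ((2*Real.log N + 4)/N) := by
  obtain ⟨hmeas, -, hinc, -, -⟩ := hB
  have hNpos : (0:ℝ) < N := by exact_mod_cast hN
  have hf : Measurable fun ω =>
      bigmax (fun j => |B (((j:ℝ)+1)/(N:ℝ)) ω - B ((j:ℝ)/(N:ℝ)) ω|) N :=
    measurable_bigmax _ (fun j => ((hmeas _).sub (hmeas _)).abs) N
  apply sq_max_moment_bound P hf (fun ω => bigmax_nonneg _ _) hN
  intro x hx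
  have hsub : {ω | x < gridMax (fun u => B u ω) N} ⊆
      ⋃ j ∈ Finset.range N, {ω | x < |B (((j:ℝ)+1)/(N:ℝ)) ω - B ((j:ℝ)/(N:ℝ)) ω|} := by
    intro ω hω
    obtain ⟨j, hj, hxj⟩ := bigmax_lt_exists _ hx.le hω
    exact mem_biUnion (Finset.mem_range.mpr hj) hxj
  refine (measure_mono hsub).trans ((measure_biUnion_finset_le _ _).trans ?_)
  have hone : ∀ j : ℕ, P {ω | x < |B (((j:ℝ)+1)/(N:ℝ)) ω - B ((j:ℝ)/(N:ℝ)) ω|}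
      ≤ ENNReal.ofReal (2*Real.exp (-(N:ℝ)*x^2/2)) := by
    intro j
    set s : ℝ := (j:ℝ)/(N:ℝ) with hsdef
    set t : ℝ := ((j:ℝ)+1)/(N:ℝ) with htdef
    have hs : 0 ≤ s := by positivity
    have hst : s ≤ t := by rw [hsdef, htdef]; gcongr; linarith
    have hmap := hinc s t hs hst
    have hset : MeasurableSet {y : ℝ | x < |y|} :=
      measurableSet_lt measurable_const measurable_abs
    have hpre : {ω | x < |B t ω - B s ω|}
        = (fun ω => B t ω - B s ω) ⁻¹' {y | x < |y|} := rfl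
    rw [hpre, ← Measure.map_apply (f := fun ω => B t ω - B s ω) ((hmeas t).sub (hmeas s)) hset, hmap]
    have hts : t - s = 1/(N:ℝ) := by rw [hsdef, htdef]; field_simp; ring
    refine (gaussian_tail_bound _ hx).trans (le_of_eq ?_)
    congr 1
    rw [Real.coe_toNNReal _ (by linarith), hts]
    field_simp
  calc ∑ j ∈ Finset.range N, P {ω | x < |B (((j:ℝ)+1)/(N:ℝ)) ω - B ((j:ℝ)/(N:ℝ)) ω|}
      ≤ ∑ _j ∈ Finset.range N, ENNReal.ofReal (2*Real.exp (-(N:ℝ)*x^2/2)) :=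
        Finset.sum_le_sum (fun j _ => hone j)
    _ = (N:ℝ≥0∞) * ENNReal.ofReal (2*Real.exp (-(N:ℝ)*x^2/2)) := by
        rw [Finset.sum_const, Finset.card_range, nsmul_eq_mul]
    _ = ENNReal.ofReal (2*(N:ℝ)*Real.exp (-(N:ℝ)*x^2/2)) := by
        rw [← ENNReal.ofReal_natCast N, ← ENNReal.ofReal_mul (by positivity)]
        congr 1
        ring

def chainC : ℝ := ∑' m : ℕ, ((m:ℝ)+4)*((Real.sqrt 2)⁻¹)^(m+1)

lemma sqrt_two_inv_lt_one : (Real.sqrt 2)⁻¹ < 1 := by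
  rw [inv_lt_one_iff₀]
  right
  rw [show (1:ℝ) = Real.sqrt 1 by simp]
  exact Real.sqrt_lt_sqrt (by norm_num) (by norm_num)

lemma sqrt_two_inv_pos : 0 < (Real.sqrt 2)⁻¹ := by positivity

lemma summable_chain : Summable (fun m : ℕ => ((m:ℝ)+4)*((Real.sqrt 2)⁻¹)^(m+1)) := by
  set r := (Real.sqrt 2)⁻¹ with hr
  have hr0 : 0 ≤ r := sqrt_two_inv_pos.le
  have hr1 : r < 1 := sqrt_two_inv_lt_one
  have hrn : ‖r‖ < 1 := by rw [Real.norm_eq_abs, abs_of_nonneg hr0]; exact hr1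
  have h1 : Summable (fun m : ℕ => (m:ℝ)*r^m) := by
    simpa using summable_pow_mul_geometric_of_norm_lt_one 1 hrn
  have h2 : Summable (fun m : ℕ => 4*r^m) :=
    (summable_geometric_of_lt_one hr0 hr1).mul_left 4
  have h3 : Summable (fun m : ℕ => ((m:ℝ)*r^m + 4*r^m)*r) := ((h1.add h2).mul_right r)
  apply h3.congr
  intro m
  ring

lemma chainC_nonneg : 0 ≤ chainC :=
  tsum_nonneg fun m => by positivity

lemma numeric_bound {k : ℕ} (hk : 2 ≤ k) :
    (∑' m : ℕ, (ENNReal.ofReal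
        ((2*Real.log ((k*2^(m+1):ℕ):ℝ) + 4)/((k*2^(m+1):ℕ):ℝ)))^((1:ℝ)/2))^2
      ≤ ENNReal.ofReal ((chainC+1)^2 * Real.log k / k) := by
  have hkpos : (0:ℝ) < k := by positivity
  have hL2 : (1:ℝ)/2 ≤ Real.log k := by
    have h1 : Real.log 2 ≤ Real.log k :=
      Real.log_le_log (by norm_num) (by exact_mod_cast hk)
    have := Real.log_two_gt_d9
    linarith
  set L := Real.log k with hLdef
  set r := (Real.sqrt 2)⁻¹ with hr
  have hr0 : 0 < r := sqrt_two_inv_pos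
  have hLk : 0 ≤ L/(k:ℝ) := by positivity
  have hterm : ∀ m : ℕ, Real.sqrt ((2*Real.log ((k*2^(m+1):ℕ):ℝ) + 4)/((k*2^(m+1):ℕ):ℝ))
      ≤ Real.sqrt (L/(k:ℝ)) * (((m:ℝ)+4)*r^(m+1)) := by
    intro m
    have hNr : ((k*2^(m+1):ℕ):ℝ) = (k:ℝ)*2^(m+1) := by push_cast; ring
    have hlog : Real.log ((k:ℝ)*2^(m+1)) = L + ((m:ℝ)+1)*Real.log 2 := by
      rw [Real.log_mul (by positivity) (by positivity), Real.log_pow]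
      push_cast
      ring
    have hlog2lt : Real.log 2 ≤ 1 := by
      have := Real.log_two_lt_d9; linarith
    have hlog2pos : 0 < Real.log 2 := Real.log_pos (by norm_num)
    have hm : (0:ℝ) ≤ (m:ℝ) := Nat.cast_nonneg m
    have hnum : 2*Real.log ((k:ℝ)*2^(m+1)) + 4 ≤ (4*(m:ℝ)+14)*L := by
      rw [hlog]
      nlinarith
    have hb1 : (2*Real.log ((k:ℝ)*2^(m+1)) + 4)/((k:ℝ)*2^(m+1))
        ≤ (L/(k:ℝ)) * ((4*(m:ℝ)+14) * ((2:ℝ)^(m+1))⁻¹) := by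
      rw [show (L/(k:ℝ)) * ((4*(m:ℝ)+14) * ((2:ℝ)^(m+1))⁻¹)
          = ((4*(m:ℝ)+14)*L)/((k:ℝ)*2^(m+1)) by field_simp]
      gcongr
    have hsq : (4*(m:ℝ)+14)*((2:ℝ)^(m+1))⁻¹ ≤ (((m:ℝ)+4)*r^(m+1))^2 := by
      have hr2 : r^2 = 2⁻¹ := by
        rw [hr, inv_pow, Real.sq_sqrt (by norm_num : (0:ℝ) ≤ 2)]
      have hpow : (r^(m+1))^2 = ((2:ℝ)^(m+1))⁻¹ := by
        rw [← pow_mul, mul_comm (m+1) 2, pow_mul, hr2, inv_pow]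
      rw [mul_pow, hpow]
      have h2p : (0:ℝ) < ((2:ℝ)^(m+1))⁻¹ := by positivity
      have hineq : 4*(m:ℝ)+14 ≤ ((m:ℝ)+4)^2 := by nlinarith
      exact mul_le_mul_of_nonneg_right hineq h2p.le
    calc Real.sqrt ((2*Real.log ((k*2^(m+1):ℕ):ℝ) + 4)/((k*2^(m+1):ℕ):ℝ))
        ≤ Real.sqrt ((L/(k:ℝ)) * ((4*(m:ℝ)+14) * ((2:ℝ)^(m+1))⁻¹)) := by
          rw [hNr]
          exact Real.sqrt_le_sqrt hb1
      _ = Real.sqrt (L/(k:ℝ)) * Real.sqrt ((4*(m:ℝ)+14) * ((2:ℝ)^(m+1))⁻¹) :=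
          Real.sqrt_mul hLk _
      _ ≤ Real.sqrt (L/(k:ℝ)) * (((m:ℝ)+4)*r^(m+1)) := by
          apply mul_le_mul_of_nonneg_left _ (Real.sqrt_nonneg _)
          calc Real.sqrt ((4*(m:ℝ)+14) * ((2:ℝ)^(m+1))⁻¹)
              ≤ Real.sqrt ((((m:ℝ)+4)*r^(m+1))^2) := Real.sqrt_le_sqrt hsq
            _ = ((m:ℝ)+4)*r^(m+1) := Real.sqrt_sq (by positivity)
  have hofr : ∀ m : ℕ, (ENNReal.ofReal
      ((2*Real.log ((k*2^(m+1):ℕ):ℝ) + 4)/((k*2^(m+1):ℕ):ℝ)))^((1:ℝ)/2)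
      = ENNReal.ofReal (Real.sqrt ((2*Real.log ((k*2^(m+1):ℕ):ℝ) + 4)/((k*2^(m+1):ℕ):ℝ))) := by
    intro m
    rw [ENNReal.ofReal_rpow_of_nonneg (by positivity) (by norm_num), Real.sqrt_eq_rpow]
  have hsum : ∑' m : ℕ, (ENNReal.ofReal
      ((2*Real.log ((k*2^(m+1):ℕ):ℝ) + 4)/((k*2^(m+1):ℕ):ℝ)))^((1:ℝ)/2)
      ≤ ENNReal.ofReal (Real.sqrt (L/(k:ℝ))) * ENNReal.ofReal chainC := by
    calc ∑' m : ℕ, (ENNReal.ofReal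
        ((2*Real.log ((k*2^(m+1):ℕ):ℝ) + 4)/((k*2^(m+1):ℕ):ℝ)))^((1:ℝ)/2)
        ≤ ∑' m : ℕ, ENNReal.ofReal (Real.sqrt (L/(k:ℝ)) * (((m:ℝ)+4)*r^(m+1))) := by
          apply ENNReal.tsum_le_tsum
          intro m
          rw [hofr m]
          exact ENNReal.ofReal_le_ofReal (hterm m)
      _ = ENNReal.ofReal (Real.sqrt (L/(k:ℝ)))
          * ∑' m : ℕ, ENNReal.ofReal (((m:ℝ)+4)*r^(m+1)) := by
          simp_rw [ENNReal.ofReal_mul (Real.sqrt_nonneg _)]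
          rw [ENNReal.tsum_mul_left]
      _ = ENNReal.ofReal (Real.sqrt (L/(k:ℝ))) * ENNReal.ofReal chainC := by
          congr 1
          rw [← ENNReal.ofReal_tsum_of_nonneg (fun m => by positivity) summable_chain]
          rfl
  calc (∑' m : ℕ, (ENNReal.ofReal
      ((2*Real.log ((k*2^(m+1):ℕ):ℝ) + 4)/((k*2^(m+1):ℕ):ℝ)))^((1:ℝ)/2))^2
      ≤ (ENNReal.ofReal (Real.sqrt (L/(k:ℝ))) * ENNReal.ofReal chainC)^2 := by gcongr
    _ = ENNReal.ofReal (chainC^2 * (L/(k:ℝ))) := by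
        rw [← ENNReal.ofReal_mul (Real.sqrt_nonneg _),
          ← ENNReal.ofReal_pow (mul_nonneg (Real.sqrt_nonneg _) chainC_nonneg),
          mul_pow, Real.sq_sqrt hLk]
        congr 1
        ring
    _ ≤ ENNReal.ofReal ((chainC+1)^2 * Real.log k / k) := by
        apply ENNReal.ofReal_le_ofReal
        rw [show (chainC+1)^2 * Real.log k / (k:ℝ) = (chainC+1)^2 * (L/(k:ℝ)) by
          rw [hLdef]; ring]
        have := chainC_nonneg
        nlinarith

end

/-- For a standard Brownian motion `B` and its discretization `B^{[k]}(t) = B(⌊kt⌋/k)`,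
`E sup_{t∈[0,1]} (B(t) − B^{[k]}(t))² = O(log k / k)` as `k → ∞`. -/
theorem bm_discretization_error
    {Ω : Type*} [MeasurableSpace Ω] (P : Measure Ω) [IsProbabilityMeasure P]
    (B : ℝ → Ω → ℝ) (hB : IsStdBM P B) :
    ∃ C : ℝ, 0 < C ∧ ∃ k₀ : ℕ, ∀ k : ℕ, k₀ ≤ k →
      ∫⁻ ω, ⨆ t : Set.Icc (0 : ℝ) 1,
          ENNReal.ofReal ((B t ω - B ((⌊(k : ℝ) * t⌋ : ℤ) / k) ω) ^ 2) ∂P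
        ≤ ENNReal.ofReal (C * Real.log k / k) := by
  refine ⟨(chainC+1)^2, pow_pos (by linarith [chainC_nonneg]) 2, 2, ?_⟩
  intro k hk
  have hk1 : 1 ≤ k := le_trans one_le_two hk
  set f : ℕ → Ω → ℝ≥0∞ :=
    fun m ω => ENNReal.ofReal (gridMax (fun u => B u ω) (k*2^(m+1))) with hf
  have hfmeas : ∀ m, Measurable (f m) := by
    intro m
    exact ENNReal.measurable_ofReal.comp
      (measurable_bigmax _ (fun j => ((hB.1 _).sub (hB.1 _)).abs) _)
  have step1 : ∫⁻ ω, ⨆ t : Set.Icc (0:ℝ) 1,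
      ENNReal.ofReal ((B t ω - B ((⌊(k:ℝ)*t⌋ : ℤ)/k) ω)^2) ∂P
      ≤ ∫⁻ ω, (∑' m, f m ω)^2 ∂P := by
    apply lintegral_mono_ae
    filter_upwards [hB.2.2.2.2] with ω hω
    apply iSup_le
    intro t
    exact chain_pointwise hω hk1 t.2
  refine step1.trans ((minkowski_tsum P f hfmeas).trans ?_)
  have step2 : ∀ m : ℕ, ∫⁻ ω, (f m ω)^2 ∂P
      ≤ ENNReal.ofReal ((2*Real.log ((k*2^(m+1):ℕ):ℝ) + 4)/((k*2^(m+1):ℕ):ℝ)) := by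
    intro m
    have hN : 1 ≤ k*2^(m+1) := Nat.mul_pos hk1 (pow_pos (by norm_num) (m+1))
    refine le_trans (le_of_eq ?_) (level_bound hB hN)
    apply lintegral_congr
    intro ω
    rw [hf]
    simp only []
    rw [← ENNReal.ofReal_pow (gridMax_nonneg _ _)]
  calc (∑' m, (∫⁻ ω, (f m ω)^2 ∂P)^((1:ℝ)/2))^2
      ≤ (∑' m : ℕ, (ENNReal.ofReal
          ((2*Real.log ((k*2^(m+1):ℕ):ℝ) + 4)/((k*2^(m+1):ℕ):ℝ)))^((1:ℝ)/2))^2 := by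
        gcongr with m
        exact step2 m
    _ ≤ ENNReal.ofReal ((chainC+1)^2 * Real.log k / k) := numeric_bound hk
end

section
/- Let Xₙ be a sequence of Lévy processes with Lévy measures Πₙ such that Xₙ(1) converges in distribution to a standard normal random variable. Then μ₄,ₙ := ∫ x⁴ Πₙ(dx) → 0 if and only if lim_{M→∞} limsup_{n→∞} ∫_{|x|>M} x⁴ Πₙ(dx) = 0. -/
open MeasureTheory ProbabilityTheory Filter Set

/-- A one-dimensional Lévy process under `P`, bundled with its Lévy–Khintchine triplet
`(b, σ2, ν)`: it starts at `0`, has stationary independent increments, a.s. right-continuous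
paths, and its marginal characteristic functions are given by the Lévy–Khintchine formula. -/
structure LevyProcess {Ω : Type*} [MeasurableSpace Ω] (P : Measure Ω) where
  X : ℝ → Ω → ℝ
  /-- drift -/
  b : ℝ
  /-- Gaussian variance -/
  σ2 : ℝ
  /-- Lévy measure -/
  ν : Measure ℝ
  meas : ∀ t, Measurable (X t)
  zero : ∀ᵐ ω ∂P, X 0 ω = 0
  rc : ∀ᵐ ω ∂P, ∀ t : ℝ, ContinuousWithinAt (fun s => X s ω) (Set.Ici t) t
  sigma2_nonneg : 0 ≤ σ2
  nu_atom : ν {0} = 0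
  nu_int : ∫⁻ x, ENNReal.ofReal (min (x ^ 2) 1) ∂ν ≠ ⊤
  indep : ∀ (n : ℕ) (τ : Fin (n + 1) → ℝ), Monotone τ → (∀ i, 0 ≤ τ i) →
    iIndepFun
      (fun (i : Fin n) ω => X (τ i.succ) ω - X (τ i.castSucc) ω) P
  stat : ∀ s t : ℝ, 0 ≤ s → s ≤ t →
    P.map (fun ω => X t ω - X s ω) = P.map (X (t - s))
  levyKhintchine : ∀ t : ℝ, 0 ≤ t → ∀ u : ℝ,
    ∫ ω, Complex.exp (Complex.I * Complex.ofReal (u * X t ω)) ∂P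
      = Complex.exp ((t : ℂ) *
          (Complex.I * Complex.ofReal (u * b) - Complex.ofReal (σ2 * u ^ 2 / 2)
            + ∫ x : ℝ,
                (Complex.exp (Complex.I * Complex.ofReal (u * x)) - 1
                  - Complex.I * Complex.ofReal (u * Set.indicator (Set.Icc (-1 : ℝ) 1) id x)) ∂ν))


open MeasureTheory ProbabilityTheory Filter Set

namespace LevyAux

lemma one_sub_cos_nonneg (t : ℝ) : 0 ≤ 1 - Real.cos t := by
  have := Real.cos_le_one t; linarith

lemma one_sub_cos_le_sq (t : ℝ) : 1 - Real.cos t ≤ t ^ 2 / 2 := by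
  have := Real.one_sub_sq_div_two_le_cos (x := t); linarith

lemma one_sub_cos_le_two (t : ℝ) : 1 - Real.cos t ≤ 2 := by
  have := Real.neg_one_le_cos t; linarith

lemma quarter_sq_le_one_sub_cos {t : ℝ} (ht : |t| ≤ 1) : t ^ 2 / 4 ≤ 1 - Real.cos t := by
  have hb := Real.cos_bound ht
  have h2 : |t| ^ 4 ≤ |t| ^ 2 := pow_le_pow_of_le_one (abs_nonneg t) ht (by norm_num)
  rw [sq_abs] at h2
  have h1 := (abs_le.mp hb).2
  nlinarith [sq_nonneg t]

lemma bound_min (u x : ℝ) : 1 - Real.cos (u * x) ≤ (u ^ 2 / 2 + 2) * min (x ^ 2) 1 := by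
  rcases le_or_gt (x ^ 2) 1 with h | h
  · rw [min_eq_left h]
    have h1 := one_sub_cos_le_sq (u * x)
    nlinarith [sq_nonneg u, sq_nonneg x, sq_nonneg (u * x)]
  · rw [min_eq_right h.le]
    have h1 := one_sub_cos_le_two (u * x)
    nlinarith [sq_nonneg u]

variable {ν : Measure ℝ}

lemma integrable_min_sq (hint : ∫⁻ x, ENNReal.ofReal (min (x ^ 2) 1) ∂ν ≠ ⊤) :
    Integrable (fun x => min (x ^ 2) 1) ν := by
  refine ⟨((measurable_id.pow_const 2).min measurable_const).aestronglyMeasurable, ?_⟩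
  rw [hasFiniteIntegral_iff_ofReal (ae_of_all _ fun x => by positivity)]
  exact lt_top_iff_ne_top.2 hint

lemma integrable_one_sub_cos (hint : ∫⁻ x, ENNReal.ofReal (min (x ^ 2) 1) ∂ν ≠ ⊤) (u : ℝ) :
    Integrable (fun x => 1 - Real.cos (u * x)) ν := by
  refine ((integrable_min_sq hint).const_mul (u ^ 2 / 2 + 2)).mono'
    ((continuous_const.sub (Real.continuous_cos.comp (continuous_const.mul continuous_id))).aestronglyMeasurable)
    (ae_of_all _ fun x => ?_)
  rw [Real.norm_eq_abs, abs_of_nonneg (one_sub_cos_nonneg _)]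
  exact bound_min u x

lemma integrable_one_sub_cos_sq (hint : ∫⁻ x, ENNReal.ofReal (min (x ^ 2) 1) ∂ν ≠ ⊤) (u : ℝ) :
    Integrable (fun x => (1 - Real.cos (u * x)) ^ 2) ν := by
  refine ((integrable_min_sq hint).const_mul (2 * (u ^ 2 / 2 + 2))).mono'
    (((continuous_const.sub (Real.continuous_cos.comp (continuous_const.mul continuous_id))).pow 2).aestronglyMeasurable)
    (ae_of_all _ fun x => ?_)
  rw [Real.norm_eq_abs, abs_of_nonneg (by positivity)]
  have h1 := one_sub_cos_nonneg (u * x)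
  have h2 := one_sub_cos_le_two (u * x)
  have h3 := bound_min u x
  nlinarith

end LevyAux

open MeasureTheory ProbabilityTheory Filter Set Complex

namespace LevyAux

variable {ν : Measure ℝ}

lemma integrable_levy_integrand (hint : ∫⁻ x, ENNReal.ofReal (min (x ^ 2) 1) ∂ν ≠ ⊤) (u : ℝ)
    (hmin : Integrable (fun x => min (x ^ 2) 1) ν) :
    Integrable (fun x : ℝ =>
      Complex.exp (Complex.I * Complex.ofReal (u * x)) - 1
        - Complex.I * Complex.ofReal (u * Set.indicator (Set.Icc (-1 : ℝ) 1) id x)) ν := by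
  set C : ℝ := u ^ 2 + (2 + |u|) * u ^ 2 + 2 with hC
  refine (hmin.const_mul C).mono' ?_ (ae_of_all _ fun x => ?_)
  · apply AEStronglyMeasurable.sub
    apply AEStronglyMeasurable.sub
    · exact (Complex.continuous_exp.comp
        (continuous_const.mul (Complex.continuous_ofReal.comp
          (continuous_const.mul continuous_id)))).aestronglyMeasurable
    · exact aestronglyMeasurable_const
    · refine Measurable.aestronglyMeasurable ?_
      exact measurable_const.mul (Complex.measurable_ofReal.comp
        (((measurable_id.indicator measurableSet_Icc)).const_mul u))
  · have hexp : ∀ t : ℝ, ‖Complex.exp (Complex.I * (t : ℂ))‖ = 1 := by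
      intro t
      rw [Complex.norm_exp]
      have : (Complex.I * (t : ℂ)).re = 0 := by simp
      rw [this, Real.exp_zero]
    have habsz : ∀ t : ℝ, ‖Complex.I * (t : ℂ)‖ = |t| := by
      intro t; simp
    by_cases hx : x ∈ Set.Icc (-1 : ℝ) 1
    · have hind : Set.indicator (Set.Icc (-1 : ℝ) 1) id x = x := Set.indicator_of_mem hx id
      rw [hind]
      have hx1 : |x| ≤ 1 := abs_le.mpr ⟨hx.1, hx.2⟩
      have hxsq : x ^ 2 ≤ 1 := by nlinarith [abs_nonneg x, _root_.sq_abs x]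
      have hminx : min (x ^ 2) 1 = x ^ 2 := min_eq_left hxsq
      by_cases habs : |u * x| ≤ 1
      · have h1 : ‖Complex.I * ((u * x : ℝ) : ℂ)‖ ≤ 1 := by rw [habsz]; exact habs
        have h2 := Complex.norm_exp_sub_one_sub_id_le h1
        rw [habsz] at h2
        calc ‖Complex.exp (Complex.I * ((u * x : ℝ) : ℂ)) - 1 - Complex.I * ((u * x : ℝ) : ℂ)‖
            ≤ |u * x| ^ 2 := h2
          _ ≤ C * min (x ^ 2) 1 := by
              rw [hminx, hC]
              have : |u * x| ^ 2 = u ^ 2 * x ^ 2 := by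
                rw [abs_mul, mul_pow, _root_.sq_abs, _root_.sq_abs]
              nlinarith [sq_nonneg u, sq_nonneg x, abs_nonneg u]
      · push_neg at habs
        have hux : 1 < u ^ 2 * x ^ 2 := by
          nlinarith [_root_.sq_abs (u * x), abs_mul u x, abs_nonneg (u * x)]
        calc ‖Complex.exp (Complex.I * ((u * x : ℝ) : ℂ)) - 1 - Complex.I * ((u * x : ℝ) : ℂ)‖
            ≤ ‖Complex.exp (Complex.I * ((u * x : ℝ) : ℂ)) - 1‖ + ‖Complex.I * ((u * x : ℝ) : ℂ)‖ :=
              norm_sub_le _ _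
          _ ≤ (‖Complex.exp (Complex.I * ((u * x : ℝ) : ℂ))‖ + 1) + |u * x| := by
              gcongr
              · exact (norm_sub_le _ _).trans (by simp)
              · rw [habsz]
          _ ≤ 2 + |u| := by
              rw [hexp]
              have : |u * x| ≤ |u| := by
                rw [abs_mul]; nlinarith [abs_nonneg u, abs_nonneg x]
              linarith
          _ ≤ C * min (x ^ 2) 1 := by
              rw [hminx, hC]
              nlinarith [abs_nonneg u, sq_nonneg u, sq_nonneg x, sq_nonneg (u*x)]
    · have hind : Set.indicator (Set.Icc (-1 : ℝ) 1) id x = 0 := Set.indicator_of_notMem hx id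
      rw [hind]
      have hx1 : 1 < |x| := by
        by_contra hcon
        push_neg at hcon
        exact hx ⟨neg_le_of_abs_le hcon, le_of_abs_le hcon⟩
      have hminx : min (x ^ 2) 1 = 1 := min_eq_right (by nlinarith [_root_.sq_abs x, abs_nonneg x])
      simp only [mul_zero, Complex.ofReal_zero, mul_zero, sub_zero]
      calc ‖Complex.exp (Complex.I * ((u * x : ℝ) : ℂ)) - 1‖
          ≤ ‖Complex.exp (Complex.I * ((u * x : ℝ) : ℂ))‖ + 1 := (norm_sub_le _ _).trans (by simp)
        _ = 2 := by rw [hexp]; norm_num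
        _ ≤ C * min (x ^ 2) 1 := by rw [hminx, hC]; nlinarith [sq_nonneg u, abs_nonneg u, sq_nonneg (u*u)]

end LevyAux

open MeasureTheory ProbabilityTheory Filter Set Complex Real
open scoped NNReal ENNReal

namespace LevyAux

lemma integrable_bdd {f : ℝ → ℝ} (hc : Continuous f) (C : ℝ) (hC : ∀ x, |f x| ≤ C)
    (μ : Measure ℝ) [IsFiniteMeasure μ] : Integrable f μ :=
  (integrable_const C).mono' hc.aestronglyMeasurable
    (ae_of_all _ fun x => by simpa [Real.norm_eq_abs] using hC x)

lemma integrable_cexp (μ : Measure ℝ) [IsFiniteMeasure μ] (u : ℝ) :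
    Integrable (fun x => Complex.exp (Complex.I * Complex.ofReal (u * x))) μ := by
  refine (integrable_const (1 : ℝ)).mono' ?_ (ae_of_all _ fun x => ?_)
  · exact (Complex.continuous_exp.comp (continuous_const.mul
      (Complex.continuous_ofReal.comp (continuous_const.mul continuous_id)))).aestronglyMeasurable
  · rw [Complex.norm_exp]
    simp

lemma integral_cexp_re (μ : Measure ℝ) [IsFiniteMeasure μ] (u : ℝ) :
    (∫ x, Complex.exp (Complex.I * Complex.ofReal (u * x)) ∂μ).re
      = ∫ x, Real.cos (u * x) ∂μ := by
  rw [show (∫ x, Complex.exp (Complex.I * Complex.ofReal (u * x)) ∂μ).re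
      = RCLike.re (∫ x, Complex.exp (Complex.I * Complex.ofReal (u * x)) ∂μ) from rfl,
    ← integral_re (integrable_cexp μ u)]
  refine integral_congr_ae (ae_of_all _ fun x => ?_)
  show (Complex.exp (Complex.I * Complex.ofReal (u * x))).re = _
  simp [Complex.exp_re]

lemma integral_cexp_im (μ : Measure ℝ) [IsFiniteMeasure μ] (u : ℝ) :
    (∫ x, Complex.exp (Complex.I * Complex.ofReal (u * x)) ∂μ).im
      = ∫ x, Real.sin (u * x) ∂μ := by
  rw [show (∫ x, Complex.exp (Complex.I * Complex.ofReal (u * x)) ∂μ).im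
      = RCLike.im (∫ x, Complex.exp (Complex.I * Complex.ofReal (u * x)) ∂μ) from rfl,
    ← integral_im (integrable_cexp μ u)]
  refine integral_congr_ae (ae_of_all _ fun x => ?_)
  show (Complex.exp (Complex.I * Complex.ofReal (u * x))).im = _
  simp [Complex.exp_im]

lemma norm_integral_cexp (μ : Measure ℝ) [IsFiniteMeasure μ] (u : ℝ) :
    ‖∫ x, Complex.exp (Complex.I * Complex.ofReal (u * x)) ∂μ‖
      = Real.sqrt ((∫ x, Real.cos (u * x) ∂μ) ^ 2 + (∫ x, Real.sin (u * x) ∂μ) ^ 2) := by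
  rw [← integral_cexp_re μ u, ← integral_cexp_im μ u, Complex.norm_def,
    Complex.normSq_apply]
  congr 1
  ring

lemma gaussian_cf (u : ℝ) :
    ∫ x, Complex.exp (Complex.I * Complex.ofReal (u * x)) ∂(gaussianReal 0 1)
      = Complex.exp (Complex.ofReal (-(u ^ 2 / 2))) := by
  rw [gaussianReal_of_var_ne_zero 0 one_ne_zero]
  have hd : gaussianPDF 0 1 = fun x => ((Real.toNNReal (gaussianPDFReal 0 1 x) : ℝ≥0) : ℝ≥0∞) := rfl
  rw [hd, integral_withDensity_eq_integral_smul ((measurable_gaussianPDFReal 0 1).real_toNNReal) _]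
  have hpt : ∀ x : ℝ, (Real.toNNReal (gaussianPDFReal 0 1 x) : ℝ≥0)
        • Complex.exp (Complex.I * Complex.ofReal (u * x))
      = Complex.ofReal ((Real.sqrt (2 * π))⁻¹)
        * (Complex.exp (Complex.I * (u : ℂ) * (x : ℂ))
            * Complex.exp (-(((1/2 : ℝ)) : ℂ) * (x : ℂ) ^ 2)) := by
    intro x
    have hnn : 0 ≤ gaussianPDFReal 0 1 x := gaussianPDFReal_nonneg 0 1 x
    rw [NNReal.smul_def, Real.coe_toNNReal _ hnn, Complex.real_smul]
    have hpdf : gaussianPDFReal 0 1 x = (Real.sqrt (2 * π))⁻¹ * Real.exp (-x ^ 2 / 2) := by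
      rw [gaussianPDFReal]; norm_num
    rw [hpdf, Complex.ofReal_mul, Complex.ofReal_exp, mul_assoc]
    congr 1
    rw [← Complex.exp_add, ← Complex.exp_add]
    congr 1
    push_cast
    ring
  calc ∫ x, (Real.toNNReal (gaussianPDFReal 0 1 x) : ℝ≥0)
        • Complex.exp (Complex.I * Complex.ofReal (u * x))
      = ∫ x : ℝ, Complex.ofReal ((Real.sqrt (2 * π))⁻¹)
          * (Complex.exp (Complex.I * (u : ℂ) * (x : ℂ))
              * Complex.exp (-(((1/2 : ℝ)) : ℂ) * (x : ℂ) ^ 2)) :=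
        integral_congr_ae (ae_of_all _ fun x => hpt x)
    _ = Complex.ofReal ((Real.sqrt (2 * π))⁻¹)
          * ∫ x : ℝ, Complex.exp (Complex.I * (u : ℂ) * (x : ℂ))
              * Complex.exp (-(((1/2 : ℝ)) : ℂ) * (x : ℂ) ^ 2) := integral_const_mul _ _
    _ = Complex.exp (Complex.ofReal (-(u ^ 2 / 2))) := by
        rw [fourierIntegral_gaussian (by norm_num : (0:ℝ) < (((1/2 : ℝ) : ℂ)).re) (u : ℂ)]
        have h2π : ((π : ℂ) / (((1/2 : ℝ)) : ℂ)) = ((2 * π : ℝ) : ℂ) := by push_cast; ring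
        rw [h2π]
        have hsq : ((2 * π : ℝ) : ℂ) ^ (1/2 : ℂ) = ((Real.sqrt (2 * π) : ℝ) : ℂ) := by
          rw [Real.sqrt_eq_rpow, Complex.ofReal_cpow (by positivity)]
          norm_num
        rw [hsq, ← mul_assoc, ← Complex.ofReal_mul,
          inv_mul_cancel₀ (ne_of_gt (Real.sqrt_pos.mpr (by positivity))),
          Complex.ofReal_one, one_mul]
        congr 1
        push_cast
        ring

lemma exists_pos_lb {h M : ℝ} (hh : 0 < h) :
    ∃ c > 0, ∀ x : ℝ, h ≤ |x| → |x| ≤ M →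
      c ≤ (1 - Real.cos (1 * x)) ^ 2 + (1 - Real.cos (Real.sqrt 2 * x)) ^ 2 := by
  set f : ℝ → ℝ := fun x => (1 - Real.cos (1 * x)) ^ 2 + (1 - Real.cos (Real.sqrt 2 * x)) ^ 2
    with hf
  have hfc : Continuous f := by
    apply Continuous.add <;> exact
      (Continuous.sub continuous_const
        (Real.continuous_cos.comp (continuous_const.mul continuous_id))).pow 2
  set S : Set ℝ := Icc (-M) M ∩ {x | h ≤ |x|} with hS
  by_cases hne : S.Nonempty
  · obtain ⟨x₀, hx₀, hmin⟩ := (isCompact_Icc.inter_right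
      (isClosed_le continuous_const _root_.continuous_abs)).exists_isMinOn hne hfc.continuousOn
    refine ⟨f x₀, ?_, fun x hx1 hx2 => hmin ⟨⟨(abs_le.mp hx2).1, (abs_le.mp hx2).2⟩, hx1⟩⟩
    rcases lt_or_eq_of_le (by positivity : (0:ℝ) ≤ f x₀) with hpos | heq
    · exact hpos
    exfalso
    have h0 : f x₀ = 0 := heq.symm
    rw [hf] at h0
    have hcc : (1 - Real.cos (1 * x₀)) ^ 2 = 0 ∧ (1 - Real.cos (Real.sqrt 2 * x₀)) ^ 2 = 0 :=
      (add_eq_zero_iff_of_nonneg (sq_nonneg _) (sq_nonneg _)).mp h0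
    have hc1 : Real.cos x₀ = 1 := by
      have := pow_eq_zero_iff (n := 2) (by norm_num) |>.mp hcc.1
      rw [one_mul] at this; linarith [this]
    have hc2 : Real.cos (Real.sqrt 2 * x₀) = 1 := by
      have := pow_eq_zero_iff (n := 2) (by norm_num) |>.mp hcc.2
      linarith [this]
    obtain ⟨n, hn⟩ := (Real.cos_eq_one_iff _).mp hc1
    obtain ⟨m, hm⟩ := (Real.cos_eq_one_iff _).mp hc2
    have hx0ne : x₀ ≠ 0 := by
      intro h0'
      have : h ≤ |x₀| := hx₀.2
      rw [h0', abs_zero] at this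
      linarith
    have hnne : (n : ℝ) ≠ 0 := by
      intro h0'
      rw [h0', zero_mul] at hn
      exact hx0ne hn.symm
    have hπ : (2 * π) ≠ 0 := by positivity
    have hfrac : Real.sqrt 2 = (m : ℝ) / (n : ℝ) := by
      have h1 : Real.sqrt 2 * ((n : ℝ) * (2 * π)) = (m : ℝ) * (2 * π) := by
        rw [hn, hm]
      field_simp at h1 ⊢
      nlinarith [h1, Real.pi_pos]
    have : (n : ℤ) ≠ 0 := by exact_mod_cast fun hh0 => hnne (by exact_mod_cast congrArg (Int.cast : ℤ → ℝ) hh0)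
    exact irrational_sqrt_two ⟨(m : ℚ) / (n : ℚ), by rw [hfrac]; push_cast; ring⟩
  · refine ⟨1, one_pos, fun x hx1 hx2 => absurd ?_ (fun hmem => hne ⟨x, hmem⟩)⟩
    exact ⟨⟨(abs_le.mp hx2).1, (abs_le.mp hx2).2⟩, hx1⟩

end LevyAux
open MeasureTheory ProbabilityTheory Filter Set

namespace LevyAux

lemma g_tendsto {Ω : Type*} [MeasurableSpace Ω] (P : Measure Ω) [IsProbabilityMeasure P]
    (L : ℕ → LevyProcess P)
    (hconv : ∀ f : BoundedContinuousFunction ℝ ℝ,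
      Tendsto (fun n => ∫ x, f x ∂(P.map ((L n).X 1))) atTop
        (nhds (∫ x, f x ∂(gaussianReal 0 1))))
    (u : ℝ) :
    Tendsto (fun n => (L n).σ2 * u ^ 2 / 2 + ∫ x, (1 - Real.cos (u * x)) ∂(L n).ν) atTop
      (nhds (u ^ 2 / 2)) := by
  have hmapP : ∀ n, IsProbabilityMeasure (P.map ((L n).X 1)) := fun n =>
    Measure.isProbabilityMeasure_map ((L n).meas 1).aemeasurable
  have hac : Tendsto (fun n => ∫ x, Real.cos (u * x) ∂(P.map ((L n).X 1))) atTop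
      (nhds (∫ x, Real.cos (u * x) ∂(gaussianReal 0 1))) := by
    have := hconv (BoundedContinuousFunction.ofNormedAddCommGroup (fun x => Real.cos (u * x))
      (Real.continuous_cos.comp (continuous_const.mul continuous_id)) 1
      (fun x => by simpa [Real.norm_eq_abs] using Real.abs_cos_le_one (u * x)))
    simpa [BoundedContinuousFunction.coe_ofNormedAddCommGroup] using this
  have has : Tendsto (fun n => ∫ x, Real.sin (u * x) ∂(P.map ((L n).X 1))) atTop
      (nhds (∫ x, Real.sin (u * x) ∂(gaussianReal 0 1))) := by
    have := hconv (BoundedContinuousFunction.ofNormedAddCommGroup (fun x => Real.sin (u * x))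
      (Real.continuous_sin.comp (continuous_const.mul continuous_id)) 1
      (fun x => by simpa [Real.norm_eq_abs] using Real.abs_sin_le_one (u * x)))
    simpa [BoundedContinuousFunction.coe_ofNormedAddCommGroup] using this
  have hnorm : Tendsto
      (fun n => ‖∫ x, Complex.exp (Complex.I * Complex.ofReal (u * x)) ∂(P.map ((L n).X 1))‖)
      atTop (nhds (Real.exp (-(u ^ 2 / 2)))) := by
    have h1 := (Real.continuous_sqrt.tendsto _).comp ((hac.pow 2).add (has.pow 2))
    have h2 : Real.sqrt ((∫ x, Real.cos (u * x) ∂(gaussianReal 0 1)) ^ 2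
        + (∫ x, Real.sin (u * x) ∂(gaussianReal 0 1)) ^ 2) = Real.exp (-(u ^ 2 / 2)) := by
      rw [← LevyAux.norm_integral_cexp (gaussianReal 0 1) u, LevyAux.gaussian_cf u,
        Complex.norm_exp, Complex.ofReal_re]
    have hre : ∀ n, ‖∫ x, Complex.exp (Complex.I * Complex.ofReal (u * x))
          ∂(P.map ((L n).X 1))‖
        = Real.sqrt ((∫ x, Real.cos (u * x) ∂(P.map ((L n).X 1))) ^ 2
            + (∫ x, Real.sin (u * x) ∂(P.map ((L n).X 1))) ^ 2) := fun n =>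
      haveI := hmapP n
      LevyAux.norm_integral_cexp _ u
    refine Tendsto.congr (fun n => (hre n).symm) ?_
    rw [← h2]
    simpa [Function.comp_def] using h1
  have hid : ∀ n, ‖∫ x, Complex.exp (Complex.I * Complex.ofReal (u * x)) ∂(P.map ((L n).X 1))‖
      = Real.exp (-((L n).σ2 * u ^ 2 / 2 + ∫ x, (1 - Real.cos (u * x)) ∂(L n).ν)) := by
    intro n
    have hmeas : AEStronglyMeasurable (fun x : ℝ => Complex.exp (Complex.I * Complex.ofReal (u * x)))
        (P.map ((L n).X 1)) :=
      (Complex.continuous_exp.comp (continuous_const.mul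
        (Complex.continuous_ofReal.comp (continuous_const.mul continuous_id)))).aestronglyMeasurable
    have hintF := LevyAux.integrable_levy_integrand (L n).nu_int u
      (LevyAux.integrable_min_sq (L n).nu_int)
    have hre : (∫ x : ℝ, (Complex.exp (Complex.I * Complex.ofReal (u * x)) - 1
          - Complex.I * Complex.ofReal (u * Set.indicator (Set.Icc (-1 : ℝ) 1) id x)) ∂(L n).ν).re
        = ∫ x, (Real.cos (u * x) - 1) ∂(L n).ν := by
      rw [show (∫ x : ℝ, (Complex.exp (Complex.I * Complex.ofReal (u * x)) - 1
          - Complex.I * Complex.ofReal (u * Set.indicator (Set.Icc (-1 : ℝ) 1) id x)) ∂(L n).ν).re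
        = RCLike.re (∫ x : ℝ, (Complex.exp (Complex.I * Complex.ofReal (u * x)) - 1
          - Complex.I * Complex.ofReal (u * Set.indicator (Set.Icc (-1 : ℝ) 1) id x)) ∂(L n).ν)
          from rfl, ← integral_re hintF]
      refine integral_congr_ae (ae_of_all _ fun x => ?_)
      show (Complex.exp (Complex.I * Complex.ofReal (u * x)) - 1
          - Complex.I * Complex.ofReal (u * Set.indicator (Set.Icc (-1 : ℝ) 1) id x)).re = _
      simp [Complex.exp_re]
    have hneg : ∫ x, (Real.cos (u * x) - 1) ∂(L n).ν
        = - ∫ x, (1 - Real.cos (u * x)) ∂(L n).ν := by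
      rw [← integral_neg]
      exact integral_congr_ae (ae_of_all _ fun x => by ring)
    have e1 : (((1 : ℝ) : ℂ) * (Complex.I * Complex.ofReal (u * (L n).b)
          - Complex.ofReal ((L n).σ2 * u ^ 2 / 2)
          + ∫ x : ℝ, (Complex.exp (Complex.I * Complex.ofReal (u * x)) - 1
          - Complex.I * Complex.ofReal (u * Set.indicator (Set.Icc (-1 : ℝ) 1) id x)) ∂(L n).ν)).re
        = -((L n).σ2 * u ^ 2 / 2 + ∫ x, (1 - Real.cos (u * x)) ∂(L n).ν) := by
      rw [Complex.ofReal_one, one_mul, Complex.add_re, Complex.sub_re, Complex.ofReal_re,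
        hre, hneg]
      have hI0 : (Complex.I * Complex.ofReal (u * (L n).b)).re = 0 := by simp
      rw [hI0]
      ring
    rw [integral_map ((L n).meas 1).aemeasurable hmeas, (L n).levyKhintchine 1 zero_le_one u,
      Complex.norm_exp, e1]
  have hexp : Tendsto (fun n => Real.exp (-((L n).σ2 * u ^ 2 / 2
      + ∫ x, (1 - Real.cos (u * x)) ∂(L n).ν))) atTop (nhds (Real.exp (-(u ^ 2 / 2)))) :=
    Tendsto.congr (fun n => hid n) hnorm
  have hlog := ((Real.continuousAt_log (Real.exp_pos _).ne').tendsto).comp hexp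
  simp only [Function.comp_def, Real.log_exp] at hlog
  have := hlog.neg
  simpa using this

lemma J_tendsto {Ω : Type*} [MeasurableSpace Ω] (P : Measure Ω) [IsProbabilityMeasure P]
    (L : ℕ → LevyProcess P)
    (hconv : ∀ f : BoundedContinuousFunction ℝ ℝ,
      Tendsto (fun n => ∫ x, f x ∂(P.map ((L n).X 1))) atTop
        (nhds (∫ x, f x ∂(gaussianReal 0 1))))
    (u : ℝ) :
    Tendsto (fun n => ∫ x, (1 - Real.cos (u * x)) ^ 2 ∂(L n).ν) atTop (nhds 0) := by
  have h1 := g_tendsto P L hconv u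
  have h2 := g_tendsto P L hconv (2 * u)
  have hcomb := (h1.const_mul 2).sub (h2.div_const 2)
  have hlim0 : (2 : ℝ) * (u ^ 2 / 2) - (2 * u) ^ 2 / 2 / 2 = 0 := by ring
  rw [hlim0] at hcomb
  refine hcomb.congr fun n => ?_
  have hIu := LevyAux.integrable_one_sub_cos (L n).nu_int u
  have hI2u := LevyAux.integrable_one_sub_cos (L n).nu_int (2 * u)
  have hstep : ∫ x, (1 - Real.cos (u * x)) ^ 2 ∂(L n).ν
      = ∫ x, (2 * (1 - Real.cos (u * x)) - (1 / 2) * (1 - Real.cos ((2 * u) * x))) ∂(L n).ν := by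
    refine integral_congr_ae (ae_of_all _ fun x => ?_)
    have hc : Real.cos ((2 * u) * x) = 2 * Real.cos (u * x) ^ 2 - 1 := by
      rw [show (2 * u) * x = 2 * (u * x) by ring, Real.cos_two_mul]
    show (1 - Real.cos (u * x)) ^ 2
        = 2 * (1 - Real.cos (u * x)) - 1 / 2 * (1 - Real.cos (2 * u * x))
    rw [hc]; ring
  rw [hstep, integral_sub (hIu.const_mul 2) (hI2u.const_mul (1 / 2)),
    integral_const_mul, integral_const_mul]
  ring

end LevyAux

/-- For a sequence of Lévy processes `Xₙ` with Lévy measures `Πₙ` such that `Xₙ(1)` converges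
in distribution to a standard normal, `μ₄,ₙ = ∫ x⁴ Πₙ(dx) → 0` if and only if
`lim_{M→∞} limsup_n ∫_{|x|>M} x⁴ Πₙ(dx) = 0` (uniform integrability of fourth moments). -/
theorem fourth_moment_tendsto_zero_iff
    {Ω : Type*} [MeasurableSpace Ω] (P : Measure Ω) [IsProbabilityMeasure P]
    (L : ℕ → LevyProcess P)
    (hconv : ∀ f : BoundedContinuousFunction ℝ ℝ,
      Tendsto (fun n => ∫ x, f x ∂(P.map ((L n).X 1))) atTop
        (nhds (∫ x, f x ∂(gaussianReal 0 1)))) :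
    Tendsto (fun n => ∫⁻ x, ENNReal.ofReal (x ^ 4) ∂(L n).ν) atTop (nhds 0)
      ↔ Tendsto (fun M : ℝ =>
          Filter.limsup
            (fun n => ∫⁻ x in {x : ℝ | M < |x|}, ENNReal.ofReal (x ^ 4) ∂(L n).ν)
            atTop)
          atTop (nhds 0) := by
  constructor
  · intro htot
    have hzero : (fun M : ℝ => Filter.limsup
        (fun n => ∫⁻ x in {x : ℝ | M < |x|}, ENNReal.ofReal (x ^ 4) ∂(L n).ν) atTop)
        = fun _ => (0 : ℝ≥0∞) := by
      funext M
      refine le_antisymm ?_ zero_le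
      calc Filter.limsup (fun n => ∫⁻ x in {x : ℝ | M < |x|}, ENNReal.ofReal (x ^ 4) ∂(L n).ν) atTop
          ≤ Filter.limsup (fun n => ∫⁻ x, ENNReal.ofReal (x ^ 4) ∂(L n).ν) atTop :=
            limsup_le_limsup (Eventually.of_forall fun n => setLIntegral_le_lintegral _ _)
        _ = 0 := htot.limsup_eq
    rw [hzero]
    exact tendsto_const_nhds
  · intro hT
    rw [ENNReal.tendsto_nhds_zero]
    intro ε hε
    obtain ⟨δ, hδ0, hδε⟩ : ∃ δ : ℝ, 0 < δ ∧ ENNReal.ofReal δ ≤ ε := by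
      obtain ⟨r, -, hr0, hrε⟩ := ENNReal.lt_iff_exists_real_btwn.mp hε
      exact ⟨r, ENNReal.ofReal_pos.mp hr0, hrε.le⟩
    -- choose M
    have hTM := hT.eventually_lt_const (ENNReal.ofReal_pos.mpr (by linarith : (0:ℝ) < δ / 2))
    obtain ⟨M, hM1, hMlt⟩ := ((eventually_ge_atTop (1 : ℝ)).and hTM).exists
    have ev3 : ∀ᶠ n in atTop,
        ∫⁻ x in {x : ℝ | M < |x|}, ENNReal.ofReal (x ^ 4) ∂(L n).ν ≤ ENNReal.ofReal (δ / 2) :=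
      (eventually_lt_of_limsup_lt hMlt).mono fun n hn => hn.le
    -- choose h
    set h : ℝ := Real.sqrt δ / 4 with hh_def
    have hh : 0 < h := by
      rw [hh_def]
      have := Real.sqrt_pos.mpr hδ0
      positivity
    have hhsq : h ^ 2 = δ / 16 := by
      rw [hh_def, div_pow, Real.sq_sqrt hδ0.le]
      norm_num
    -- second moment control
    have ev1 : ∀ᶠ n in atTop,
        (L n).σ2 * (1 / h) ^ 2 / 2 + ∫ x, (1 - Real.cos ((1 / h) * x)) ∂(L n).ν ≤ (1 / h) ^ 2 :=
      (LevyAux.g_tendsto P L hconv (1 / h)).eventually_le_const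
        (by have hp : (0:ℝ) < (1 / h) ^ 2 := by positivity
            linarith : (1 / h) ^ 2 / 2 < (1 / h) ^ 2)
    -- lower bound constant for the middle range
    obtain ⟨c, hc0, hcf⟩ := LevyAux.exists_pos_lb (M := M) hh
    -- middle range control
    have hK : Tendsto (fun n => ∫ x, ((1 - Real.cos (1 * x)) ^ 2
        + (1 - Real.cos (Real.sqrt 2 * x)) ^ 2) ∂(L n).ν) atTop (nhds 0) := by
      have h12 := (LevyAux.J_tendsto P L hconv 1).add (LevyAux.J_tendsto P L hconv (Real.sqrt 2))
      rw [add_zero] at h12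
      refine Tendsto.congr (fun n => ?_) h12
      exact (integral_add (LevyAux.integrable_one_sub_cos_sq (L n).nu_int 1)
        (LevyAux.integrable_one_sub_cos_sq (L n).nu_int (Real.sqrt 2))).symm
    have hM4c : (0 : ℝ) < δ / 4 * (c / M ^ 4) := by
      have hM0 : (0:ℝ) < M := lt_of_lt_of_le one_pos hM1
      positivity
    have ev2 : ∀ᶠ n in atTop, ∫ x, ((1 - Real.cos (1 * x)) ^ 2
        + (1 - Real.cos (Real.sqrt 2 * x)) ^ 2) ∂(L n).ν ≤ δ / 4 * (c / M ^ 4) :=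
      hK.eventually_le_const hM4c
    filter_upwards [ev1, ev2, ev3] with n hn1 hn2 hn3
    have hM0 : (0:ℝ) < M := lt_of_lt_of_le one_pos hM1
    -- partition
    have hunion : ({x : ℝ | |x| ≤ h} ∪ ({x : ℝ | h < |x| ∧ |x| ≤ M} ∪ {x : ℝ | M < |x|}))
        = (univ : Set ℝ) := by
      ext x
      simp only [mem_union, mem_setOf_eq, mem_univ, iff_true]
      rcases le_or_gt |x| h with h1 | h1
      · exact Or.inl h1
      rcases le_or_gt |x| M with h2 | h2
      · exact Or.inr (Or.inl ⟨h1, h2⟩)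
      · exact Or.inr (Or.inr h2)
    -- term 1
    have hT1 : ∫⁻ x in {x : ℝ | |x| ≤ h}, ENNReal.ofReal (x ^ 4) ∂(L n).ν
        ≤ ENNReal.ofReal (δ / 4) := by
      have hInt : Integrable (fun x => 4 * h ^ 4 * (1 - Real.cos ((1 / h) * x))) (L n).ν :=
        (LevyAux.integrable_one_sub_cos (L n).nu_int (1 / h)).const_mul _
      calc ∫⁻ x in {x : ℝ | |x| ≤ h}, ENNReal.ofReal (x ^ 4) ∂(L n).ν
          ≤ ∫⁻ x in {x : ℝ | |x| ≤ h},
              ENNReal.ofReal (4 * h ^ 4 * (1 - Real.cos ((1 / h) * x))) ∂(L n).ν := by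
            refine setLIntegral_mono (ENNReal.measurable_ofReal.comp
              ((continuous_const.mul (continuous_const.sub
                (Real.continuous_cos.comp (continuous_const.mul continuous_id)))).measurable))
              fun x hx => ?_
            refine ENNReal.ofReal_le_ofReal ?_
            have hxh : |x| ≤ h := hx
            have ht : |(1 / h) * x| ≤ 1 := by
              rw [abs_mul, _root_.abs_of_nonneg (by positivity : (0:ℝ) ≤ 1 / h)]
              rw [div_mul_eq_mul_div, one_mul, div_le_one hh]
              exact hxh
            have hq := LevyAux.quarter_sq_le_one_sub_cos ht
            have hexp : ((1 / h) * x) ^ 2 = x ^ 2 / h ^ 2 := by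
              field_simp
            rw [hexp] at hq
            have hx2 : x ^ 2 ≤ h ^ 2 := by
              calc x ^ 2 = |x| ^ 2 := (_root_.sq_abs x).symm
                _ ≤ h ^ 2 := pow_le_pow_left₀ (abs_nonneg x) hxh 2
            have k1 : 4 * h ^ 4 * (x ^ 2 / h ^ 2 / 4) ≤ 4 * h ^ 4 * (1 - Real.cos ((1 / h) * x)) :=
              mul_le_mul_of_nonneg_left hq (by positivity)
            have k2 : 4 * h ^ 4 * (x ^ 2 / h ^ 2 / 4) = h ^ 2 * x ^ 2 := by
              field_simp
            nlinarith [sq_nonneg x, sq_nonneg (x ^ 2)]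
        _ ≤ ∫⁻ x, ENNReal.ofReal (4 * h ^ 4 * (1 - Real.cos ((1 / h) * x))) ∂(L n).ν :=
            setLIntegral_le_lintegral _ _
        _ = ENNReal.ofReal (∫ x, 4 * h ^ 4 * (1 - Real.cos ((1 / h) * x)) ∂(L n).ν) :=
            (ofReal_integral_eq_lintegral_ofReal hInt (ae_of_all _ fun x =>
              mul_nonneg (by positivity) (LevyAux.one_sub_cos_nonneg _))).symm
        _ ≤ ENNReal.ofReal (δ / 4) := by
            refine ENNReal.ofReal_le_ofReal ?_
            rw [integral_const_mul]
            have hIle : ∫ x, (1 - Real.cos ((1 / h) * x)) ∂(L n).ν ≤ (1 / h) ^ 2 := by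
              have := (L n).sigma2_nonneg
              nlinarith [hn1, sq_nonneg (1 / h)]
            have h4 : 4 * h ^ 4 * (1 / h) ^ 2 = 4 * h ^ 2 := by
              field_simp
            have hI0 : 0 ≤ ∫ x, (1 - Real.cos ((1 / h) * x)) ∂(L n).ν :=
              integral_nonneg fun x => LevyAux.one_sub_cos_nonneg _
            calc 4 * h ^ 4 * ∫ x, (1 - Real.cos ((1 / h) * x)) ∂(L n).ν
                ≤ 4 * h ^ 4 * (1 / h) ^ 2 :=
                  mul_le_mul_of_nonneg_left hIle (by positivity)
              _ = 4 * h ^ 2 := h4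
              _ = δ / 4 := by rw [hhsq]; ring
    -- term 2
    have hT2 : ∫⁻ x in {x : ℝ | h < |x| ∧ |x| ≤ M}, ENNReal.ofReal (x ^ 4) ∂(L n).ν
        ≤ ENNReal.ofReal (δ / 4) := by
      have hInt : Integrable (fun x => M ^ 4 / c * ((1 - Real.cos (1 * x)) ^ 2
          + (1 - Real.cos (Real.sqrt 2 * x)) ^ 2)) (L n).ν :=
        ((LevyAux.integrable_one_sub_cos_sq (L n).nu_int 1).add
          (LevyAux.integrable_one_sub_cos_sq (L n).nu_int (Real.sqrt 2))).const_mul _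
      calc ∫⁻ x in {x : ℝ | h < |x| ∧ |x| ≤ M}, ENNReal.ofReal (x ^ 4) ∂(L n).ν
          ≤ ∫⁻ x in {x : ℝ | h < |x| ∧ |x| ≤ M},
              ENNReal.ofReal (M ^ 4 / c * ((1 - Real.cos (1 * x)) ^ 2
                + (1 - Real.cos (Real.sqrt 2 * x)) ^ 2)) ∂(L n).ν := by
            refine setLIntegral_mono (ENNReal.measurable_ofReal.comp
              ((continuous_const.mul (Continuous.add
                ((continuous_const.sub (Real.continuous_cos.comp
                  (continuous_const.mul continuous_id))).pow 2)
                ((continuous_const.sub (Real.continuous_cos.comp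
                  (continuous_const.mul continuous_id))).pow 2))).measurable))
              fun x hx => ?_
            refine ENNReal.ofReal_le_ofReal ?_
            have h1 := hcf x hx.1.le hx.2
            have hx4 : x ^ 4 ≤ M ^ 4 := by
              have ha : |x| ^ 4 ≤ M ^ 4 := pow_le_pow_left₀ (abs_nonneg x) hx.2 4
              have hb : |x| ^ 4 = x ^ 4 := by
                rw [← _root_.abs_pow]
                exact _root_.abs_of_nonneg (by positivity)
              linarith
            have h2 : M ^ 4 / c * c ≤ M ^ 4 / c * ((1 - Real.cos (1 * x)) ^ 2
                + (1 - Real.cos (Real.sqrt 2 * x)) ^ 2) :=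
              mul_le_mul_of_nonneg_left h1 (by positivity)
            rw [div_mul_cancel₀ _ (ne_of_gt hc0)] at h2
            linarith
        _ ≤ ∫⁻ x, ENNReal.ofReal (M ^ 4 / c * ((1 - Real.cos (1 * x)) ^ 2
              + (1 - Real.cos (Real.sqrt 2 * x)) ^ 2)) ∂(L n).ν :=
            setLIntegral_le_lintegral _ _
        _ = ENNReal.ofReal (∫ x, M ^ 4 / c * ((1 - Real.cos (1 * x)) ^ 2
              + (1 - Real.cos (Real.sqrt 2 * x)) ^ 2) ∂(L n).ν) :=
            (ofReal_integral_eq_lintegral_ofReal hInt (ae_of_all _ fun x =>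
              mul_nonneg (by positivity) (by positivity))).symm
        _ ≤ ENNReal.ofReal (δ / 4) := by
            refine ENNReal.ofReal_le_ofReal ?_
            rw [integral_const_mul]
            calc M ^ 4 / c * ∫ x, ((1 - Real.cos (1 * x)) ^ 2
                  + (1 - Real.cos (Real.sqrt 2 * x)) ^ 2) ∂(L n).ν
                ≤ M ^ 4 / c * (δ / 4 * (c / M ^ 4)) :=
                  mul_le_mul_of_nonneg_left hn2 (by positivity)
              _ = δ / 4 := by
                  field_simp
    -- combine
    calc ∫⁻ x, ENNReal.ofReal (x ^ 4) ∂(L n).ν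
        = ∫⁻ x in ({x : ℝ | |x| ≤ h} ∪ ({x : ℝ | h < |x| ∧ |x| ≤ M} ∪ {x : ℝ | M < |x|})),
            ENNReal.ofReal (x ^ 4) ∂(L n).ν := by rw [hunion, Measure.restrict_univ]
      _ ≤ (∫⁻ x in {x : ℝ | |x| ≤ h}, ENNReal.ofReal (x ^ 4) ∂(L n).ν)
          + ∫⁻ x in ({x : ℝ | h < |x| ∧ |x| ≤ M} ∪ {x : ℝ | M < |x|}),
              ENNReal.ofReal (x ^ 4) ∂(L n).ν := lintegral_union_le _ _ _
      _ ≤ (∫⁻ x in {x : ℝ | |x| ≤ h}, ENNReal.ofReal (x ^ 4) ∂(L n).ν)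
          + ((∫⁻ x in {x : ℝ | h < |x| ∧ |x| ≤ M}, ENNReal.ofReal (x ^ 4) ∂(L n).ν)
            + ∫⁻ x in {x : ℝ | M < |x|}, ENNReal.ofReal (x ^ 4) ∂(L n).ν) :=
          add_le_add le_rfl (lintegral_union_le _ _ _)
      _ ≤ ENNReal.ofReal (δ / 4) + (ENNReal.ofReal (δ / 4) + ENNReal.ofReal (δ / 2)) :=
          add_le_add hT1 (add_le_add hT2 hn3)
      _ = ENNReal.ofReal δ := by
          rw [← ENNReal.ofReal_add (by linarith) (by linarith),
            ← ENNReal.ofReal_add (by linarith) (by linarith)]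
          congr 1
          ring
      _ ≤ ε := hδε
end
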